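/- arXiv:2210.00977 — 5 statements merged into one kernel-verified Lean document; each statement's English description precedes it below -/
import Mathlib

section
/- For any integer d ≥ 1, any integer k ≥ 1, and any real numbers x_1, ..., x_k, the complete homogeneous symmetric polynomial of even degree 2d satisfies h_{2d}(x_1, ..., x_k) ≥ h_{2d}(x̄, ..., x̄) = C(k + 2d - 1, 2d) · x̄^{2d}, where x̄ = (x_1 + ... + x_k)/k. -/
open MeasureTheory Real Set Nat Finset

/-- The complete homogeneous symmetric polynomial of degree `d` in `k` real variables. -/
noncomputable def hSym (k d : ℕ) (x : Fin k → ℝ) : ℝ :=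
  ∑ ℓ ∈ Finset.Nat.antidiagonalTuple k d, ∏ i, x i ^ ℓ i


noncomputable def expMeas : Measure ℝ :=
  ((volume : Measure ℝ).restrict (Set.Ioi 0)).withDensity
    fun t => (Real.toNNReal (Real.exp (-t)) : ENNReal)

lemma meas_density : Measurable fun t : ℝ => Real.toNNReal (Real.exp (-t)) := by
  fun_prop

lemma gamma_int (n : ℕ) :
    (∫ t in Set.Ioi (0:ℝ), Real.exp (-t) * t ^ n) = (n ! : ℝ) := by
  have h := Real.Gamma_eq_integral (s := (n:ℝ) + 1) (by positivity)
  rw [Real.Gamma_nat_eq_factorial] at h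
  simp only [add_sub_cancel_right, Real.rpow_natCast] at h
  rw [← h]

lemma gamma_integrable (n : ℕ) :
    IntegrableOn (fun t : ℝ => Real.exp (-t) * t ^ n) (Set.Ioi 0) := by
  have h := Real.GammaIntegral_convergent (s := (n:ℝ) + 1) (by positivity)
  simpa only [add_sub_cancel_right, Real.rpow_natCast] using h

lemma expMeas_integral_pow (n : ℕ) :
    (∫ t, t ^ n ∂expMeas) = (n ! : ℝ) := by
  rw [expMeas, integral_withDensity_eq_integral_smul meas_density]
  rw [← gamma_int n]
  congr 1 with t
  simp [NNReal.smul_def, Real.coe_toNNReal _ (Real.exp_pos _).le, mul_comm]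

lemma expMeas_integrable_pow (n : ℕ) :
    Integrable (fun t : ℝ => t ^ n) expMeas := by
  rw [expMeas, integrable_withDensity_iff (by fun_prop)
    (Filter.Eventually.of_forall fun t => ENNReal.coe_lt_top)]
  refine (gamma_integrable n).congr_fun ?_ measurableSet_Ioi
  intro t ht
  simp [Real.coe_toNNReal _ (Real.exp_pos _).le, mul_comm]

instance : IsProbabilityMeasure expMeas := by
  constructor
  rw [expMeas, withDensity_apply _ MeasurableSet.univ, Measure.restrict_restrict MeasurableSet.univ,
    Set.univ_inter]
  have h0 : ENNReal.ofReal (∫ t in Set.Ioi (0:ℝ), Real.exp (-t)) =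
      ∫⁻ t in Set.Ioi (0:ℝ), ENNReal.ofReal (Real.exp (-t)) := by
    refine MeasureTheory.ofReal_integral_eq_lintegral_ofReal ?_ ?_
    · have := gamma_integrable 0; simp only [pow_zero, mul_one] at this; exact this
    · exact Filter.Eventually.of_forall fun t => (Real.exp_pos _).le
  have h1 : ∫ t in Set.Ioi (0:ℝ), Real.exp (-t) = 1 := by simpa using gamma_int 0
  rw [h1] at h0
  simp only [ENNReal.ofReal_one] at h0
  exact h0.symm

def ExpSpace : Type := ℝ

noncomputable instance : MeasureSpace ExpSpace :=
  { toMeasurableSpace := inferInstanceAs (MeasurableSpace ℝ)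
    volume := expMeas }

instance : IsProbabilityMeasure (volume : Measure ExpSpace) := inferInstanceAs (IsProbabilityMeasure expMeas)

def ExpSpace.toReal : ExpSpace → ℝ := id

lemma ExpSpace.integral_pow (n : ℕ) : (∫ t : ExpSpace, t.toReal ^ n) = (n ! : ℝ) :=
  expMeas_integral_pow n

lemma ExpSpace.integrable_pow (n : ℕ) : Integrable (fun t : ExpSpace => t.toReal ^ n) :=
  expMeas_integrable_pow n

variable {k : ℕ}

lemma integrable_monomial (ℓ : Fin k → ℕ) (x : Fin k → ℝ) :
    Integrable (fun t : Fin k → ExpSpace => ∏ i, (t i).toReal ^ ℓ i * x i ^ ℓ i) := by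
  have := Integrable.fintype_prod (𝕜 := ℝ) (μ := fun _ => volume)
    (f := fun (i : Fin k) (s : ExpSpace) => s.toReal ^ ℓ i * x i ^ ℓ i) (fun i => ?_)
  · exact this
  · exact (ExpSpace.integrable_pow (ℓ i)).mul_const _

lemma integral_monomial (ℓ : Fin k → ℕ) (x : Fin k → ℝ) :
    (∫ t : Fin k → ExpSpace, ∏ i, (t i).toReal ^ ℓ i * x i ^ ℓ i)
      = (∏ i, (ℓ i)! : ℕ) * ∏ i, x i ^ ℓ i := by
  rw [integral_fintype_prod_volume_eq_prod (f := fun (i : Fin k) (s : ExpSpace) =>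
    s.toReal ^ ℓ i * x i ^ ℓ i)]
  push_cast
  rw [← Finset.prod_mul_distrib]
  refine Finset.prod_congr rfl fun i _ => ?_
  rw [integral_mul_const, ExpSpace.integral_pow]


lemma expand_pow (m : ℕ) (x : Fin k → ℝ) (t : Fin k → ExpSpace) :
    (∑ i, (t i).toReal * x i) ^ m =
      ∑ ℓ ∈ Finset.piAntidiag Finset.univ m,
        (Nat.multinomial Finset.univ ℓ : ℝ) * ∏ i, (t i).toReal ^ ℓ i * x i ^ ℓ i := by
  rw [Finset.sum_pow_eq_sum_piAntidiag]
  refine Finset.sum_congr rfl fun ℓ _ => ?_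
  congr 1
  exact Finset.prod_congr rfl fun i _ => mul_pow _ _ _

lemma integrable_repr (m : ℕ) (x : Fin k → ℝ) :
    Integrable (fun t : Fin k → ExpSpace => (∑ i, (t i).toReal * x i) ^ m) := by
  simp_rw [expand_pow m x]
  exact integrable_finset_sum _ fun ℓ _ => ((integrable_monomial ℓ x).const_mul _)

lemma repr_eq (m : ℕ) (x : Fin k → ℝ) :
    (∫ t : Fin k → ExpSpace, (∑ i, (t i).toReal * x i) ^ m) = (m ! : ℝ) * hSym k m x := by
  simp_rw [expand_pow m x]
  rw [integral_finset_sum _ fun ℓ _ => ((integrable_monomial ℓ x).const_mul _)]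
  rw [hSym, ← Finset.piAntidiag_univ_fin_eq_antidiagonalTuple m k, Finset.mul_sum]
  refine Finset.sum_congr rfl fun ℓ hℓ => ?_
  rw [integral_const_mul, integral_monomial, ← mul_assoc]
  congr 2
  rw [Finset.mem_piAntidiag] at hℓ
  rw [← Nat.cast_mul, mul_comm, Nat.multinomial_spec, hℓ.1]


/-- Equivalence between `Sym (Fin k) n` and tuples summing to `n`. -/
def antidiagSymEquiv (k n : ℕ) :
    Sym (Fin k) n ≃ {ℓ // ℓ ∈ Finset.Nat.antidiagonalTuple k n} where
  toFun m := ⟨fun i => Multiset.count i m.1, Finset.Nat.mem_antidiagonalTuple.mpr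
    ((Multiset.sum_count_eq_card (fun a _ => Finset.mem_univ a)).trans m.2)⟩
  invFun ℓ := ⟨∑ i, Multiset.replicate (ℓ.1 i) i, by
    have h := Finset.Nat.mem_antidiagonalTuple.mp ℓ.2
    rw [Multiset.card_sum Finset.univ (fun i => Multiset.replicate (ℓ.1 i) i)]
    simpa using h⟩
  left_inv m := by
    ext a
    show Multiset.count a (∑ x : Fin k, Multiset.replicate (Multiset.count x m.1) x)
      = Multiset.count a m.1
    rw [Multiset.count_sum']
    simp [Multiset.count_replicate]
  right_inv ℓ := by
    ext j
    show Multiset.count j (∑ x : Fin k, Multiset.replicate (ℓ.1 x) x) = ℓ.1 j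
    rw [Multiset.count_sum']
    simp [Multiset.count_replicate]

lemma card_antidiagonalTuple (k n : ℕ) :
    (Finset.Nat.antidiagonalTuple k n).card = (k + n - 1).choose n := by
  classical
  rw [← Fintype.card_coe, ← Fintype.card_congr (antidiagSymEquiv k n),
    Sym.card_sym_eq_choose, Fintype.card_fin]

lemma hSym_const (k m : ℕ) (c : ℝ) :
    hSym k m (fun _ => c) = ((k + m - 1).choose m : ℝ) * c ^ m := by
  rw [hSym]
  have : ∀ ℓ ∈ Finset.Nat.antidiagonalTuple k m, (∏ i, c ^ ℓ i) = c ^ m := by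
    intro ℓ hℓ
    rw [Finset.prod_pow_eq_pow_sum, Finset.Nat.mem_antidiagonalTuple.mp hℓ]
  rw [Finset.sum_congr rfl this, Finset.sum_const, card_antidiagonalTuple, nsmul_eq_mul]

lemma hSym_perm (k m : ℕ) (x : Fin k → ℝ) (σ : Equiv.Perm (Fin k)) :
    hSym k m (x ∘ σ) = hSym k m x := by
  rw [hSym, hSym]
  refine Finset.sum_bij' (fun ℓ _ => fun i => ℓ (σ⁻¹ i)) (fun ℓ _ => fun i => ℓ (σ i)) ?_ ?_ ?_ ?_ ?_
  · intro ℓ hℓ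
    rw [Finset.Nat.mem_antidiagonalTuple] at hℓ ⊢
    show ∑ i, ℓ (σ⁻¹ i) = m
    rw [Equiv.sum_comp σ⁻¹ ℓ]; exact hℓ
  · intro ℓ hℓ
    rw [Finset.Nat.mem_antidiagonalTuple] at hℓ ⊢
    show ∑ i, ℓ (σ i) = m
    rw [Equiv.sum_comp σ ℓ]; exact hℓ
  · intro ℓ _; ext i; simp
  · intro ℓ _; ext i; simp
  · intro ℓ _
    rw [← Equiv.prod_comp σ (fun i => x i ^ ℓ (σ⁻¹ i))]
    refine Finset.prod_congr rfl fun i _ => ?_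
    simp

theorem hSym_even_ge_mean (d k : ℕ) (hd : 1 ≤ d) (hk : 1 ≤ k) (x : Fin k → ℝ) :
    hSym k (2 * d) x ≥ hSym k (2 * d) (fun _ => (∑ i, x i) / k) ∧
    hSym k (2 * d) (fun _ => (∑ i, x i) / k) =
      (Nat.choose (k + 2 * d - 1) (2 * d) : ℝ) * ((∑ i, x i) / k) ^ (2 * d) := by
  refine ⟨?_, hSym_const k (2 * d) _⟩
  haveI : NeZero k := ⟨by omega⟩
  set m := 2 * d with hm
  set c : ℝ := (∑ i, x i) / k with hc
  -- the permuted vectors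
  set p : Fin k → Fin k → ℝ := fun j => x ∘ (Equiv.addRight j : Equiv.Perm (Fin k)) with hp
  have hkpos : (0:ℝ) < k := by positivity
  show hSym k m x ≥ hSym k m (fun _ => c)
  -- pointwise Jensen
  have key : ∀ t : Fin k → ExpSpace,
      (∑ i, (t i).toReal * c) ^ m ≤
        ∑ j : Fin k, (1 / (k:ℝ)) * (∑ i, (t i).toReal * p j i) ^ m := by
    intro t
    have havg : (∑ i, (t i).toReal * c)
        = ∑ j : Fin k, (1 / (k:ℝ)) • (∑ i, (t i).toReal * p j i) := by
      simp only [smul_eq_mul, Finset.mul_sum]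
      rw [Finset.sum_comm]
      refine Finset.sum_congr rfl fun i _ => ?_
      have hpe : ∀ j : Fin k, p j i = x (i + j) := fun j => rfl
      simp only [hpe]
      have hrot : ∑ j : Fin k, x (i + j) = ∑ u, x u :=
        Fintype.sum_equiv (Equiv.addLeft i) _ _ fun j => rfl
      have hfac : ∑ j : Fin k, (t i).toReal * x (i + j)
          = (t i).toReal * ∑ u, x u := by
        rw [← Finset.mul_sum, hrot]
      rw [← Finset.mul_sum, hfac, hc]
      ring
    rw [havg]
    have hconv : ConvexOn ℝ Set.univ fun y : ℝ => y ^ m :=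
      Even.convexOn_pow (even_two_mul d)
    have hsum : ∑ _j : Fin k, (1 / (k:ℝ)) = 1 := by
      rw [Finset.sum_const, Finset.card_univ, Fintype.card_fin, nsmul_eq_mul]
      field_simp
    have hj := hconv.map_sum_le (p := fun j : Fin k => ∑ i, (t i).toReal * p j i)
      (fun j _ => by positivity) hsum (fun j _ => Set.mem_univ _)
    simpa [smul_eq_mul] using hj
  -- integrate
  have hL := repr_eq (k := k) m (fun _ => c)
  have hint : (∫ t : Fin k → ExpSpace, (∑ i, (t i).toReal * c) ^ m)
      ≤ ∫ t : Fin k → ExpSpace, ∑ j : Fin k, (1 / (k:ℝ)) * (∑ i, (t i).toReal * p j i) ^ m := by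
    refine integral_mono (integrable_repr m _) ?_ key
    exact integrable_finset_sum _ fun j _ => (integrable_repr m (p j)).const_mul _
  rw [hL] at hint
  rw [integral_finset_sum _ fun j _ => (integrable_repr m (p j)).const_mul _] at hint
  simp_rw [integral_const_mul, repr_eq] at hint
  have hperm : ∀ j : Fin k, hSym k m (p j) = hSym k m x := fun j =>
    hSym_perm k m x (Equiv.addRight j)
  simp_rw [hperm] at hint
  rw [Finset.sum_const, Finset.card_univ, Fintype.card_fin, nsmul_eq_mul] at hint
  have : (k:ℝ) * (1 / k * ((m ! : ℝ) * hSym k m x)) = (m ! : ℝ) * hSym k m x := by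
    field_simp
  rw [this] at hint
  have hfact : (0:ℝ) < (m ! : ℝ) := by positivity
  exact le_of_mul_le_mul_left hint hfact
end

section
/- For any integer d ≥ 1, any integer k ≥ 1, and any real numbers x_1, ..., x_k, the complete homogeneous symmetric polynomial of even degree satisfies h_{2d}(x_1, ..., x_k) ≥ 0 (Hunter's theorem). -/
open MeasureTheory Real Set ProbabilityTheory
open scoped NNReal ENNReal

noncomputable def expDens : ℝ → ℝ≥0 := fun t => (gammaPDFReal 1 1 t).toNNReal

lemma expDens_meas : Measurable expDens :=
  (measurable_gammaPDFReal 1 1).real_toNNReal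

lemma gammaMeasure_one_one_eq :
    gammaMeasure 1 1 = volume.withDensity (fun t => (expDens t : ℝ≥0∞)) := rfl

lemma expDens_apply (t : ℝ) (n : ℕ) :
    (expDens t : ℝ) * t ^ n = Set.indicator (Ici 0) (fun t => exp (-t) * t ^ n) t := by
  simp only [expDens, gammaPDFReal, Real.coe_toNNReal', Set.indicator, mem_Ici]
  split_ifs with h
  · rw [Real.Gamma_one]
    simp [Real.rpow_zero]
    left; positivity
  · simp

lemma integrable_pow_gamma (n : ℕ) :
    Integrable (fun t : ℝ => t ^ n) (gammaMeasure 1 1) := by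
  rw [gammaMeasure_one_one_eq,
    integrable_withDensity_iff_integrable_smul expDens_meas]
  have : Integrable (Set.indicator (Ici 0) (fun t => exp (-t) * t ^ n)) := by
    rw [integrable_indicator_iff measurableSet_Ici]
    rw [integrableOn_Ici_iff_integrableOn_Ioi]
    have := Real.GammaIntegral_convergent (s := n + 1) (by positivity)
    refine this.congr_fun (fun t ht => ?_) measurableSet_Ioi
    rw [add_sub_cancel_right]
    beta_reduce
    rw [Real.rpow_natCast]
  refine this.congr (Filter.Eventually.of_forall fun t => ?_)
  rw [← expDens_apply]
  simp [NNReal.smul_def]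


lemma integral_pow_gamma (n : ℕ) :
    ∫ t, t ^ n ∂(gammaMeasure 1 1) = (Nat.factorial n : ℝ) := by
  rw [gammaMeasure_one_one_eq, integral_withDensity_eq_integral_smul expDens_meas]
  have h : (fun t : ℝ => expDens t • t ^ n)
      = Set.indicator (Ici 0) (fun t => exp (-t) * t ^ n) := by
    funext t
    rw [← expDens_apply]
    simp [NNReal.smul_def]
  rw [h, integral_indicator measurableSet_Ici, integral_Ici_eq_integral_Ioi]
  have hG := Real.Gamma_eq_integral (s := (n : ℝ) + 1) (by positivity)
  rw [Real.Gamma_nat_eq_factorial] at hG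
  rw [hG]
  refine setIntegral_congr_fun measurableSet_Ioi fun t ht => ?_
  rw [add_sub_cancel_right, Real.rpow_natCast]

lemma integrable_prod_pow (k : ℕ) (ℓ : Fin k → ℕ) :
    Integrable (fun t : Fin k → ℝ => ∏ i, t i ^ ℓ i)
      (Measure.pi fun _ => gammaMeasure 1 1) := by
  letI : MeasureSpace ℝ := ⟨gammaMeasure 1 1⟩
  haveI : IsProbabilityMeasure (volume : Measure ℝ) :=
    isProbabilityMeasure_gammaMeasure one_pos one_pos
  exact MeasureTheory.Integrable.fintype_prod (f := fun i (t : ℝ) => t ^ ℓ i)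
    (fun i => integrable_pow_gamma (ℓ i))

lemma pi_moment (k : ℕ) (ℓ : Fin k → ℕ) :
    ∫ t : Fin k → ℝ, ∏ i, t i ^ ℓ i ∂(Measure.pi fun _ => gammaMeasure 1 1)
      = ∏ i, (Nat.factorial (ℓ i) : ℝ) := by
  letI : MeasureSpace ℝ := ⟨gammaMeasure 1 1⟩
  haveI : IsProbabilityMeasure (volume : Measure ℝ) :=
    isProbabilityMeasure_gammaMeasure one_pos one_pos
  have := MeasureTheory.integral_fintype_prod_eq_prod (𝕜 := ℝ) (ι := Fin k)
    (f := fun i (t : ℝ) => t ^ ℓ i) (μ := fun _ => gammaMeasure 1 1)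
  have e : (Measure.pi fun _ : Fin k => gammaMeasure 1 1)
      = (volume : Measure (Fin k → ℝ)) := rfl
  rw [this]
  exact Finset.prod_congr rfl fun i _ => integral_pow_gamma (ℓ i)

lemma piAntidiag_univ_eq (k n : ℕ) :
    Finset.piAntidiag (Finset.univ : Finset (Fin k)) n
      = Finset.Nat.antidiagonalTuple k n := by
  ext f
  simp [Finset.mem_piAntidiag, Finset.Nat.mem_antidiagonalTuple]

lemma hunter_aux (d k : ℕ) (x : Fin k → ℝ) :
    0 ≤ (Nat.factorial (2 * d) : ℝ) *
      ∑ ℓ ∈ Finset.Nat.antidiagonalTuple k (2 * d), ∏ i, x i ^ ℓ i := by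
  set ν : Measure (Fin k → ℝ) := Measure.pi fun _ => gammaMeasure 1 1 with hν
  have expand : ∀ t : Fin k → ℝ, (∑ i, x i * t i) ^ (2 * d)
      = ∑ ℓ ∈ Finset.piAntidiag Finset.univ (2 * d),
          (Nat.multinomial Finset.univ ℓ : ℝ) *
            ((∏ i, x i ^ ℓ i) * ∏ i, t i ^ ℓ i) := by
    intro t
    rw [Finset.sum_pow_eq_sum_piAntidiag]
    refine Finset.sum_congr rfl fun ℓ _ => ?_
    rw [← Finset.prod_mul_distrib]
    simp_rw [← mul_pow]
  have key : ∫ t, (∑ i, x i * t i) ^ (2 * d) ∂ν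
      = (Nat.factorial (2 * d) : ℝ) *
        ∑ ℓ ∈ Finset.Nat.antidiagonalTuple k (2 * d), ∏ i, x i ^ ℓ i := by
    simp_rw [expand]
    rw [integral_finset_sum _
      (fun ℓ _ => ((integrable_prod_pow k ℓ).const_mul _).const_mul _)]
    rw [← piAntidiag_univ_eq, Finset.mul_sum]
    refine Finset.sum_congr rfl fun ℓ hℓ => ?_
    rw [integral_const_mul, integral_const_mul, pi_moment]
    have hsum : ∑ i, ℓ i = 2 * d := (Finset.mem_piAntidiag.mp hℓ).1
    have hspec := Nat.multinomial_spec Finset.univ ℓ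
    rw [hsum] at hspec
    push_cast [← hspec]
    ring
  rw [← key]
  refine integral_nonneg fun t => ?_
  rw [pow_mul']
  positivity

/-- Hunter's theorem: complete homogeneous symmetric polynomials of even degree
are nonnegative. -/
theorem hSym_even_nonneg (d k : ℕ) (hd : 1 ≤ d) (hk : 1 ≤ k) (x : Fin k → ℝ) :
    0 ≤ hSym k (2 * d) x := by
  have h := hunter_aux d k x
  have hfac : (0 : ℝ) < (Nat.factorial (2 * d) : ℝ) := by
    exact_mod_cast Nat.factorial_pos (2 * d)
  unfold hSym
  nlinarith
end

section
/- Let X be a real-valued random variable taking finitely many values, with all moments finite, and let m and d be integers with 1 ≤ d ≤ m/2. Let X_1, ..., X_{m-2d+1} be i.i.d. copies of X. Then E[h_{2d}(X_1, ..., X_{m-2d+1})] ≥ C(m, 2d) · (E[X])^{2d}. -/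
open Finset

noncomputable def Hh : List ℝ → ℕ → ℝ
  | [], n => if n = 0 then 1 else 0
  | (x :: L), n => ∑ j ∈ Finset.range (n+1), x^j * Hh L (n-j)

lemma Hh_cons (x : ℝ) (L : List ℝ) (n : ℕ) :
    Hh (x :: L) n = ∑ j ∈ Finset.range (n+1), x^j * Hh L (n-j) := rfl

@[simp] lemma Hh_zero (L : List ℝ) : Hh L 0 = 1 := by
  induction L with
  | nil => simp [Hh]
  | cons x L ih => simp [Hh_cons, ih]

lemma tri_sum (n : ℕ) (f : ℕ → ℕ → ℝ) :
    ∑ j ∈ range (n+1), ∑ a ∈ range (n-j+1), f j a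
      = ∑ b ∈ range (n+1), ∑ j ∈ range (b+1), f j (b-j) := by
  have h1 : ∀ j ∈ range (n+1), ∑ a ∈ range (n-j+1), f j a
      = ∑ b ∈ range (n+1), if j ≤ b then f j (b-j) else 0 := by
    intro j hj
    simp only [Finset.mem_range] at hj
    rw [Finset.sum_ite, Finset.sum_const_zero, add_zero]
    have : Finset.filter (fun b => j ≤ b) (range (n+1)) = Finset.Ico j (n+1) := by
      ext b; simp [Finset.mem_Ico]; omega
    rw [this, Finset.sum_Ico_eq_sum_range]
    have h2 : n + 1 - j = n - j + 1 := by omega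
    rw [h2]
    apply Finset.sum_congr rfl
    intro a _
    congr 1
    omega
  rw [Finset.sum_congr rfl h1, Finset.sum_comm]
  apply Finset.sum_congr rfl
  intro b hb
  simp only [Finset.mem_range] at hb
  rw [Finset.sum_ite, Finset.sum_const_zero, add_zero]
  apply Finset.sum_congr _ (fun _ _ => rfl)
  ext j; simp [Finset.mem_range]; omega

-- cons-cons expansion
lemma Hh_cons_cons (x y : ℝ) (L : List ℝ) (n : ℕ) :
    Hh (x :: y :: L) n
      = ∑ b ∈ range (n+1), (∑ j ∈ range (b+1), x^j * y^(b-j)) * Hh L (n-b) := by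
  rw [Hh_cons]
  simp_rw [Hh_cons, Finset.mul_sum, ← mul_assoc]
  rw [tri_sum n (fun j a => x^j * y^a * Hh L (n-j-a))]
  apply Finset.sum_congr rfl
  intro b hb
  rw [Finset.sum_mul]
  apply Finset.sum_congr rfl
  intro j hj
  simp only [Finset.mem_range] at hb hj
  congr 2
  omega

-- hockey stick
lemma hockey (q b : ℕ) : ∑ a ∈ range (b+1), ((a+q-1).choose a : ℝ) = (b+q).choose b := by
  induction b with
  | zero => simp
  | succ b ih =>
    rw [Finset.sum_range_succ, ih]
    have h1 : (b+1+q-1).choose (b+1) = (b+q).choose (b+1) := by congr 1; omega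
    rw [h1, show b+1+q = b+q+1 by omega]
    rw [← Nat.cast_add, ← Nat.choose_succ_succ]

-- replicate-append convolution
lemma Hh_replicate_append (s : ℝ) (L : List ℝ) (q : ℕ) : ∀ n : ℕ,
    Hh (List.replicate q s ++ L) n
      = ∑ a ∈ range (n+1), ((a+q-1).choose a : ℝ) * s^a * Hh L (n-a) := by
  induction q with
  | zero =>
    intro n
    simp only [List.replicate_zero, List.nil_append]
    rw [Finset.sum_eq_single 0]
    · simp
    · intro a _ ha
      have h0 : (a-1).choose a = 0 := Nat.choose_eq_zero_of_lt (by omega)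
      simp [h0]
    · simp
  | succ q ih =>
    intro n
    have : List.replicate (q+1) s ++ L = s :: (List.replicate q s ++ L) := by
      simp [List.replicate_succ]
    rw [this, Hh_cons]
    simp_rw [ih, Finset.mul_sum, ← mul_assoc]
    rw [tri_sum n (fun j a => s^j * ((a+q-1).choose a : ℝ) * s^a * Hh L (n-j-a))]
    apply Finset.sum_congr rfl
    intro b hb
    simp only [Finset.mem_range] at hb
    have : ∀ j ∈ range (b+1),
        s^j * (((b-j)+q-1).choose (b-j) : ℝ) * s^(b-j) * Hh L (n-j-(b-j))
          = (((b-j)+q-1).choose (b-j) : ℝ) * s^b * Hh L (n-b) := by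
      intro j hj
      simp only [Finset.mem_range] at hj
      rw [show n-j-(b-j) = n-b by omega]
      have hpow : s^j * s^(b-j) = s^b := by rw [← pow_add]; congr 1; omega
      rw [← hpow]; ring
    rw [Finset.sum_congr rfl this, ← Finset.sum_mul, ← Finset.sum_mul]
    congr 1
    congr 1
    rw [show b+(q+1)-1 = b+q by omega, ← hockey q b,
      ← Finset.sum_range_reflect (fun a => (((a+q-1).choose a : ℝ))) (b+1)]
    apply Finset.sum_congr rfl
    intro j hj
    simp

lemma pair_formula (s t : ℝ) (b : ℕ) :
    ∑ j ∈ range (b+1), (s+t)^j * (s-t)^(b-j)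
      = ∑ e ∈ range (b+1), if Even e then ((b+1).choose (e+1) : ℝ) * s^(b-e) * t^e else 0 := by
  rcases eq_or_ne t 0 with rfl | ht
  · simp only [add_zero, sub_zero]
    have hL : ∀ j ∈ range (b+1), s^j * s^(b-j) = s^b := by
      intro j hj
      simp only [Finset.mem_range] at hj
      rw [← pow_add]
      congr 1
      omega
    rw [Finset.sum_congr rfl hL, Finset.sum_const, Finset.card_range, nsmul_eq_mul]
    rw [Finset.sum_eq_single 0]
    · simp [Nat.choose_one_right]
    · intro e _ he
      simp [zero_pow he]
    · simp
  · have h2t : (2:ℝ) * t ≠ 0 := mul_ne_zero two_ne_zero ht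
    apply mul_left_cancel₀ h2t
    have key := geom_sum₂_mul (s+t) (s-t) (b+1)
    simp only [Nat.add_sub_cancel] at key
    have hsub : (s+t) - (s-t) = 2*t := by ring
    rw [hsub] at key
    rw [mul_comm ((2:ℝ)*t) (∑ j ∈ range (b+1), (s+t)^j * (s-t)^(b-j)), key]
    -- now: (s+t)^(b+1) - (s-t)^(b+1) = 2t * RHS
    have hx : (s+t)^(b+1) = ∑ i ∈ range (b+2), s^i * t^(b+1-i) * ((b+1).choose i : ℝ) :=
      add_pow s t (b+1)
    have hy : (s-t)^(b+1) = ∑ i ∈ range (b+2), s^i * (-t)^(b+1-i) * ((b+1).choose i : ℝ) := by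
      rw [sub_eq_add_neg]; exact add_pow s (-t) (b+1)
    rw [hx, hy, ← Finset.sum_sub_distrib]
    have step1 : ∀ i ∈ range (b+2),
        s^i * t^(b+1-i) * ((b+1).choose i : ℝ) - s^i * (-t)^(b+1-i) * ((b+1).choose i : ℝ)
          = (fun j => s^(b+1-j) * (t^j - (-t)^j) * ((b+1).choose j : ℝ)) (b+1-i) := by
      intro i hi
      simp only [Finset.mem_range] at hi
      simp only
      rw [show b+1-(b+1-i) = i by omega, Nat.choose_symm (by omega)]
      ring
    have refl := Finset.sum_range_reflect
      (fun j => s^(b+1-j) * (t^j - (-t)^j) * ((b+1).choose j : ℝ)) (b+2)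
    rw [show b+2-1 = b+1 from rfl] at refl
    rw [Finset.sum_congr rfl step1, refl]
    rw [Finset.sum_range_succ' (fun j => s^(b+1-j) * (t^j - (-t)^j) * ((b+1).choose j : ℝ)) (b+1)]
    simp only [pow_zero, sub_self, mul_zero, zero_mul, add_zero]
    rw [Finset.mul_sum]
    apply Finset.sum_congr rfl
    intro e he
    simp only [Finset.mem_range] at he
    rcases Nat.even_or_odd e with heven | hodd
    · rw [if_pos heven]
      have : (-t)^(e+1) = -t^(e+1) := Odd.neg_pow (by exact heven.add_one) t
      rw [this, show b+1-(e+1) = b-e by omega]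
      ring
    · rw [if_neg (by simpa using hodd)]
      have : (-t)^(e+1) = t^(e+1) := Even.neg_pow (by exact hodd.add_one) t
      rw [this]
      ring

lemma Hh_smooth (x y : ℝ) (L : List ℝ) (n : ℕ) :
    Hh (x :: y :: L) n
      = ∑ e ∈ range (n+1), if Even e then
          ((x-y)/2)^e * Hh (List.replicate (e+2) ((x+y)/2) ++ L) (n-e) else 0 := by
  set s := (x+y)/2 with hs
  set t := (x-y)/2 with htdef
  have hx : x = s + t := by rw [hs, htdef]; ring
  have hy : y = s - t := by rw [hs, htdef]; ring
  rw [Hh_cons_cons]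
  have step1 : ∀ b ∈ range (n+1),
      (∑ j ∈ range (b+1), x^j * y^(b-j)) * Hh L (n-b)
        = ∑ e ∈ range (b+1), if Even e then
            (((b-e)+e+1).choose (e+1) : ℝ) * s^(b-e) * t^e * Hh L (n-e-(b-e)) else 0 := by
    intro b hb
    rw [hx, hy, pair_formula, Finset.sum_mul]
    apply Finset.sum_congr rfl
    intro e he
    simp only [Finset.mem_range] at he
    rw [show (b:ℕ)-e+e+1 = b+1 by omega, show n-e-(b-e) = n-b by omega, ite_mul, zero_mul]
  rw [Finset.sum_congr rfl step1,
    ← tri_sum n (fun e a => if Even e then ((a+e+1).choose (e+1) : ℝ) * s^a * t^e * Hh L (n-e-a) else 0)]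
  apply Finset.sum_congr rfl
  intro e he
  simp only [Finset.mem_range] at he
  by_cases hev : Even e
  · simp only [if_pos hev]
    rw [Hh_replicate_append, Finset.mul_sum]
    apply Finset.sum_congr rfl
    intro a ha
    simp only [Finset.mem_range] at ha
    rw [show (a+(e+2)-1).choose a = (a+e+1).choose (e+1) by
        rw [show a+(e+2)-1 = a+e+1 by omega]
        rw [← Nat.choose_symm (by omega : a ≤ a+e+1)]
        congr 1
        omega]
    rw [show n-e-a = n-(e+a) by omega]
    ring
  · simp only [if_neg hev, Finset.sum_const_zero]

lemma Hh_perm {L₁ L₂ : List ℝ} (h : L₁.Perm L₂) : ∀ n, Hh L₁ n = Hh L₂ n := by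
  induction h with
  | nil => intro _; rfl
  | cons x _ ih =>
    intro n
    rw [Hh_cons, Hh_cons]
    exact Finset.sum_congr rfl fun j _ => by rw [ih]
  | swap x y L =>
    intro n
    rw [Hh_cons_cons, Hh_cons_cons]
    apply Finset.sum_congr rfl
    intro b _
    congr 1
    have reflct := Finset.sum_range_reflect (fun j => x^j * y^(b-j)) (b+1)
    rw [show b+1-1 = b from rfl] at reflct
    rw [← reflct]
    apply Finset.sum_congr rfl
    intro j hj
    simp only [Finset.mem_range] at hj
    rw [show b-(b-j) = j by omega, mul_comm]
  | trans _ _ ih1 ih2 => intro n; rw [ih1, ih2]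

lemma Hh_replicate (c : ℝ) (k n : ℕ) :
    Hh (List.replicate k c) n = ((n+k-1).choose n : ℝ) * c^n := by
  have := Hh_replicate_append c [] k n
  rw [List.append_nil] at this
  rw [this, Finset.sum_eq_single n]
  · simp [Hh]
  · intro a ha ha'
    simp only [Finset.mem_range] at ha
    have : n - a ≠ 0 := by omega
    simp [Hh, this]
  · simp

lemma le_listSum (c : ℝ) : ∀ (L : List ℝ), (∀ z ∈ L, c ≤ z) →
    (L.length : ℝ) * c ≤ L.sum := by
  intro L
  induction L with
  | nil => simp
  | cons x M ih =>
    intro hall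
    have h1 : c ≤ x := hall x List.mem_cons_self
    have h2 : (M.length : ℝ) * c ≤ M.sum := ih fun z hz => hall z (List.mem_cons_of_mem _ hz)
    simp only [List.length_cons, List.sum_cons]
    push_cast
    nlinarith

lemma lt_listSum (c : ℝ) : ∀ (L : List ℝ), (∀ z ∈ L, c ≤ z) → ∀ u ∈ L, c < u →
    (L.length : ℝ) * c < L.sum := by
  intro L
  induction L with
  | nil => intro _ u hu; simp at hu
  | cons x M ih =>
    intro hall u hu hcu
    simp only [List.length_cons, List.sum_cons]
    rcases List.mem_cons.mp hu with rfl | huM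
    · have h2 : (M.length : ℝ) * c ≤ M.sum := le_listSum c M
        fun z hz => hall z (List.mem_cons_of_mem _ hz)
      push_cast
      nlinarith
    · have h1 : c ≤ x := hall x List.mem_cons_self
      have h2 : (M.length : ℝ) * c < M.sum :=
        ih (fun z hz => hall z (List.mem_cons_of_mem _ hz)) u huM hcu
      push_cast
      nlinarith

lemma listSum_lt (c : ℝ) : ∀ (L : List ℝ), (∀ z ∈ L, z ≤ c) → ∀ u ∈ L, u < c →
    L.sum < (L.length : ℝ) * c := by
  intro L hall u hu huc
  have h1 : ∀ z ∈ L.map (fun x => -x), -c ≤ z := by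
    intro z hz
    simp only [List.mem_map] at hz
    obtain ⟨a, ha, rfl⟩ := hz
    simpa using hall a ha
  have h2 : (-u) ∈ L.map (fun x => -x) := List.mem_map.mpr ⟨u, hu, rfl⟩
  have := lt_listSum (-c) (L.map (fun x => -x)) h1 (-u) h2 (by linarith)
  rw [List.length_map] at this
  have hs : (L.map (fun x => -x)).sum = -L.sum := by
    clear h1 h2 this hall hu
    induction L with
    | nil => simp
    | cons a M ih => simp only [List.map_cons, List.sum_cons, ih]; ring
  rw [hs] at this
  linarith

theorem Hh_ge : ∀ n, Even n → ∀ L : List ℝ, L ≠ [] →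
    ((n + L.length - 1).choose n : ℝ) * (L.sum / L.length)^n ≤ Hh L n := by
  intro n
  induction n using Nat.strong_induction_on with
  | _ n IH =>
  intro hn L hL
  have hk1 : 1 ≤ L.length := List.length_pos_iff.mpr hL
  have hnonneg : ∀ m, m < n → Even m → ∀ M : List ℝ, M ≠ [] → 0 ≤ Hh M m := by
    intro m hm hme M hM
    refine le_trans ?_ (IH m hm hme M hM)
    exact mul_nonneg (Nat.cast_nonneg _) (hme.pow_nonneg _)
  set k := L.length with hkdef
  set S := L.sum with hSdef
  set c := S / (k:ℝ) with hcdef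
  have hkne : (k:ℝ) ≠ 0 := Nat.cast_ne_zero.mpr (by omega)
  classical
  set p : ℝ → Bool := fun z => decide (z ≠ c) with hpdef
  -- base: all entries equal c
  have hbase : ∀ L' : List ℝ, L'.length = k → (∀ z ∈ L', z = c) →
      ((n + k - 1).choose n : ℝ) * c ^ n ≤ Hh L' n := by
    intro L' hlen hall
    have : L' = List.replicate k c := List.eq_replicate_iff.mpr ⟨hlen, hall⟩
    rw [this, Hh_replicate]
  have key : ∀ (j : ℕ) (L' : List ℝ), L'.length = k → L'.sum = S →
      L'.countP p ≤ j → ((n + k - 1).choose n : ℝ) * c ^ n ≤ Hh L' n := by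
    intro j
    induction j with
    | zero =>
      intro L' hlen hsum hcount
      apply hbase L' hlen
      intro z hz
      have := List.countP_eq_zero.mp (Nat.le_zero.mp hcount) z hz
      simpa [hpdef] using this
    | succ j ihj =>
      intro L' hlen hsum hcount
      by_cases hall : ∀ z ∈ L', z = c
      · exact hbase L' hlen hall
      · push_neg at hall
        obtain ⟨u, huL, hune⟩ := hall
        have hsum' : L'.sum = (k:ℝ) * c := by
          rw [hsum, hcdef]
          field_simp
        -- find u0 < c and v0 > c
        have hlow : ∃ u0 ∈ L', u0 < c := by
          by_contra h
          push_neg at h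
          have := lt_listSum c L' h u huL (lt_of_le_of_ne (h u huL) (Ne.symm hune))
          rw [hsum', hlen] at this
          linarith
        have hhigh : ∃ v0 ∈ L', c < v0 := by
          by_contra h
          push_neg at h
          have := listSum_lt c L' h u huL (lt_of_le_of_ne (h u huL) hune)
          rw [hsum', hlen] at this
          linarith
        obtain ⟨u0, hu0L, hu0⟩ := hlow
        obtain ⟨v0, hv0L, hv0⟩ := hhigh
        have hvu : v0 ≠ u0 := by intro h; rw [h] at hv0; linarith
        have hv0' : v0 ∈ L'.erase u0 := (List.mem_erase_of_ne hvu).mpr hv0L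
        set L'' := (L'.erase u0).erase v0 with hL''def
        have hperm : L'.Perm (u0 :: v0 :: L'') := by
          refine (List.perm_cons_erase hu0L).trans ?_
          exact (List.perm_cons_erase hv0').cons u0
        have hlen2 : k = L''.length + 2 := by
          rw [← hlen, hperm.length_eq]
          simp
        have hsum2 : S = u0 + v0 + L''.sum := by
          rw [← hsum, hperm.sum_eq]
          simp [add_assoc]
        set wv := u0 + v0 - c with hwvdef
        set M := c :: wv :: L'' with hMdef
        have hMlen : M.length = k := by simp [hMdef]; omega
        have hMsum : M.sum = S := by simp [hMdef, hwvdef]; rw [hsum2]; ring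
        have hcount' : M.countP p ≤ j := by
          have h1 : L'.countP p = L''.countP p + 2 := by
            rw [hperm.countP_eq, List.countP_cons, List.countP_cons]
            have pu : p u0 = true := by simp [hpdef]; intro h; rw [h] at hu0; linarith
            have pv : p v0 = true := by simp [hpdef]; intro h; rw [h] at hv0; linarith
            rw [pu, pv]
            simp
          have h2 : M.countP p ≤ L''.countP p + 1 := by
            rw [hMdef, List.countP_cons, List.countP_cons]
            have pc : p c = false := by simp [hpdef]
            rw [pc]
            simp
            split <;> omega
          omega
        refine le_trans (ihj M hMlen hMsum hcount') ?_
        -- Hh M n ≤ Hh L' n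
        rw [Hh_perm hperm n, hMdef, Hh_smooth, Hh_smooth]
        apply Finset.sum_le_sum
        intro e he
        simp only [Finset.mem_range] at he
        by_cases heven : Even e
        · rw [if_pos heven, if_pos heven]
          have hsmid : (c + wv)/2 = (u0+v0)/2 := by rw [hwvdef]; ring
          rw [hsmid]
          rcases Nat.eq_zero_or_pos e with rfl | hepos
          · simp
          · have he2 : 2 ≤ e := by
              rcases heven with ⟨r, hr⟩
              omega
            have hA : 0 ≤ Hh (List.replicate (e+2) ((u0+v0)/2) ++ L'') (n - e) := by
              apply hnonneg (n - e) (by omega) _ _ (by simp)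
              rw [Nat.even_sub (by omega)]
              simp [hn, heven]
            apply mul_le_mul_of_nonneg_right _ hA
            have habs : |(c - wv)/2| ≤ |(u0 - v0)/2| := by
              rw [abs_le, hwvdef]
              have h1 : |(u0 - v0)/2| = (v0 - u0)/2 := by
                rw [abs_of_nonpos (by linarith)]
                ring
              rw [h1]
              constructor <;> [linarith; linarith]
            calc ((c - wv)/2)^e = |(c - wv)/2|^e := (heven.pow_abs _).symm
              _ ≤ |(u0 - v0)/2|^e := pow_le_pow_left₀ (abs_nonneg _) habs e
              _ = ((u0 - v0)/2)^e := heven.pow_abs _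
        · rw [if_neg heven, if_neg heven]
  exact key (L.countP p) L rfl rfl le_rfl

lemma hSym_eq_Hh : ∀ (k : ℕ) (n : ℕ) (x : Fin k → ℝ), hSym k n x = Hh (List.ofFn x) n := by
  intro k
  induction k with
  | zero =>
    intro n x
    unfold hSym
    cases n with
    | zero => simp [Finset.Nat.antidiagonalTuple_zero_zero, Hh]
    | succ n => simp [Finset.Nat.antidiagonalTuple_zero_succ, Hh]
  | succ k ih =>
    intro n x
    have hofn : List.ofFn x = x 0 :: List.ofFn (fun i : Fin k => x i.succ) := List.ofFn_succ
    rw [hofn, Hh_cons]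
    have : ∀ j ∈ range (n+1), (x 0)^j * Hh (List.ofFn (fun i : Fin k => x i.succ)) (n-j)
        = (x 0)^j * hSym k (n-j) (fun i => x i.succ) := by
      intro j _
      rw [ih]
    rw [Finset.sum_congr rfl this]
    unfold hSym
    simp_rw [Finset.mul_sum]
    rw [Finset.sum_sigma' (range (n+1)) (fun j => Finset.Nat.antidiagonalTuple k (n-j))
      (fun j ℓ => (x 0)^j * ∏ i, (x i.succ)^(ℓ i))]
    · apply Finset.sum_nbij'
        (i := fun (ℓ : Fin (k+1) → ℕ) => (⟨ℓ 0, Fin.tail ℓ⟩ : Σ _ : ℕ, Fin k → ℕ))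
        (j := fun (p : Σ _ : ℕ, Fin k → ℕ) => Fin.cons p.1 p.2)
      · intro ℓ hℓ
        simp only [Finset.Nat.mem_antidiagonalTuple] at hℓ
        simp only [Finset.mem_sigma, Finset.mem_range, Finset.Nat.mem_antidiagonalTuple]
        rw [Fin.sum_univ_succ] at hℓ
        have htail : ∑ i : Fin k, Fin.tail ℓ i = ∑ i : Fin k, ℓ i.succ := rfl
        rw [htail]
        omega
      · intro p hp
        simp only [Finset.mem_sigma, Finset.mem_range, Finset.Nat.mem_antidiagonalTuple] at hp ⊢
        rw [Fin.sum_univ_succ]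
        simp only [Fin.cons_zero, Fin.cons_succ]
        omega
      · intro ℓ hℓ
        exact Fin.cons_self_tail ℓ
      · intro p hp
        rcases p with ⟨j, ℓ'⟩
        congr 1
      · intro ℓ hℓ
        simp only
        rw [Fin.prod_univ_succ]
        simp [Fin.tail]

lemma jensen_pow (n : ℕ) (hn : Even n) {ι : Type*} [Fintype ι] (Wt : ι → ℝ) (z : ι → ℝ)
    (hW : ∀ i, 0 ≤ Wt i) (hW1 : ∑ i, Wt i = 1) :
    (∑ i, Wt i * z i)^n ≤ ∑ i, Wt i * (z i)^n := by
  have hcv : ConvexOn ℝ Set.univ (fun t : ℝ => t ^ n) := hn.convexOn_pow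
  have h := hcv.map_centerMass_le (t := Finset.univ) (w := Wt) (p := z)
    (fun i _ => hW i) (by rw [hW1]; norm_num) (fun i _ => Set.mem_univ _)
  rw [Finset.centerMass_eq_of_sum_1 _ _ hW1] at h
  rw [Finset.centerMass_eq_of_sum_1 _ _ hW1] at h
  simpa [smul_eq_mul] using h


/-- For a finitely valued random variable `X` (values `X i` with probabilities `w i`)
and i.i.d. copies `X_1, …, X_{m-2d+1}`,
`E[h_{2d}(X_1, …, X_{m-2d+1})] ≥ C(m, 2d) (E[X])^{2d}`. -/

theorem expectation_hSym_ge (N m d : ℕ) (hN : 1 ≤ N) (hd : 1 ≤ d) (hdm : 2 * d ≤ m)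
    (w X : Fin N → ℝ) (hw : ∀ i, 0 ≤ w i) (hw1 : ∑ i, w i = 1) :
    ∑ ω : Fin (m - 2 * d + 1) → Fin N,
        (∏ i, w (ω i)) * hSym (m - 2 * d + 1) (2 * d) (fun i => X (ω i)) ≥
      (Nat.choose m (2 * d) : ℝ) * (∑ i, w i * X i) ^ (2 * d) := by
  set k := m - 2 * d + 1 with hkdef
  set n := 2 * d with hndef
  have hkm : n + k - 1 = m := by omega
  have hne : Even n := ⟨d, by omega⟩
  set μ := ∑ i, w i * X i with hμdef
  set Wt : (Fin k → Fin N) → ℝ := fun ω => ∏ i, w (ω i) with hWtdef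
  set mb : (Fin k → Fin N) → ℝ := fun ω => (∑ i, X (ω i)) / k with hmbdef
  have hWnonneg : ∀ ω, 0 ≤ Wt ω := fun ω => Finset.prod_nonneg (fun i _ => hw (ω i))
  -- sum of weights = 1
  have hWsum : ∑ ω : Fin k → Fin N, Wt ω = 1 := by
    have hps := Finset.prod_univ_sum (fun _ : Fin k => (Finset.univ : Finset (Fin N)))
      (fun _ a => w a)
    rw [Fintype.piFinset_univ] at hps
    rw [hWtdef, ← hps]
    simp [hw1]
  -- marginal: for each coordinate i
  have hmarg : ∀ i : Fin k, ∑ ω : Fin k → Fin N, Wt ω * X (ω i) = μ := by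
    intro i
    have h1 : ∀ ω : Fin k → Fin N, Wt ω * X (ω i)
        = ∏ j, (fun j a => w a * (if j = i then X a else 1)) j (ω j) := by
      intro ω
      simp only
      rw [Finset.prod_mul_distrib]
      congr 1
      rw [Finset.prod_ite_eq' Finset.univ i (fun j => X (ω j))]
      simp
    calc ∑ ω : Fin k → Fin N, Wt ω * X (ω i)
        = ∑ ω : Fin k → Fin N, ∏ j, (fun j a => w a * (if j = i then X a else 1)) j (ω j) := by
          exact Finset.sum_congr rfl fun ω _ => h1 ω
      _ = ∏ j, ∑ a, w a * (if j = i then X a else 1) := by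
          have hps := Finset.prod_univ_sum (fun _ : Fin k => (Finset.univ : Finset (Fin N)))
            (fun j a => w a * (if j = i then X a else 1))
          rw [Fintype.piFinset_univ] at hps
          rw [← hps]
      _ = μ := by
          have : ∀ j : Fin k, ∑ a, w a * (if j = i then X a else 1)
              = if j = i then μ else 1 := by
            intro j
            by_cases hji : j = i
            · simp [hji, hμdef]
            · simp [hji, hw1]
          rw [Finset.prod_congr rfl (fun j _ => this j)]
          rw [Finset.prod_ite_eq' Finset.univ i (fun _ => μ)]
          simp
  -- mean of means
  have hmean : ∑ ω : Fin k → Fin N, Wt ω * mb ω = μ := by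
    have : ∀ ω : Fin k → Fin N, Wt ω * mb ω = (∑ i, Wt ω * X (ω i)) / k := by
      intro ω
      rw [hmbdef]
      simp only
      rw [div_eq_mul_inv, div_eq_mul_inv, ← Finset.mul_sum]
      ring
    rw [Finset.sum_congr rfl fun ω _ => this ω, ← Finset.sum_div]
    rw [Finset.sum_comm]
    rw [Finset.sum_congr rfl fun i _ => hmarg i]
    rw [Finset.sum_const, Finset.card_univ, Fintype.card_fin]
    rw [nsmul_eq_mul]; field_simp [show (k:ℝ) ≠ 0 from Nat.cast_ne_zero.mpr (by omega)]
  -- pointwise bound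
  have hpw : ∀ ω : Fin k → Fin N,
      (Nat.choose m n : ℝ) * (mb ω)^n ≤ hSym k n (fun i => X (ω i)) := by
    intro ω
    rw [hSym_eq_Hh]
    have hlen : (List.ofFn (fun i => X (ω i))).length = k := List.length_ofFn
    have hnil : (List.ofFn (fun i => X (ω i))) ≠ [] := by
      apply List.ne_nil_of_length_pos
      rw [hlen]; omega
    have := Hh_ge n hne (List.ofFn (fun i => X (ω i))) hnil
    rw [hlen, List.sum_ofFn, hkm] at this
    exact this
  -- combine
  rw [ge_iff_le]
  calc (Nat.choose m n : ℝ) * μ ^ n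
      = (Nat.choose m n : ℝ) * (∑ ω : Fin k → Fin N, Wt ω * mb ω) ^ n := by rw [hmean]
    _ ≤ (Nat.choose m n : ℝ) * (∑ ω : Fin k → Fin N, Wt ω * (mb ω) ^ n) := by
        apply mul_le_mul_of_nonneg_left _ (Nat.cast_nonneg _)
        exact jensen_pow n hne Wt mb hWnonneg hWsum
    _ = ∑ ω : Fin k → Fin N, Wt ω * ((Nat.choose m n : ℝ) * (mb ω) ^ n) := by
        rw [Finset.mul_sum]
        exact Finset.sum_congr rfl fun ω _ => by ring
    _ ≤ ∑ ω : Fin k → Fin N, Wt ω * hSym k n (fun i => X (ω i)) := by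
        apply Finset.sum_le_sum
        intro ω _
        exact mul_le_mul_of_nonneg_left (hpw ω) (hWnonneg ω)
end

section
/- Let m ≥ 2 be an integer and let X be a real random variable with finitely many values and mean μ = E[X]. Then Σ_{d=1}^{⌊m/2⌋} Σ over nonnegative integer tuples (ℓ_1,...,ℓ_{m-2d+1}) summing to 2d of (Π_i E[X^{ℓ_i}] − μ^{2d}) ≥ 0. -/
open scoped ENNReal NNReal
open MeasureTheory ProbabilityTheory Real Set Finset

namespace MomentAux

noncomputable def nu : Measure ℝ := expMeasure 1

lemma nu_def : nu = volume.withDensity (gammaPDF 1 1) := rfl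

instance : IsProbabilityMeasure nu := isProbabilityMeasure_expMeasure one_pos

lemma pdfReal_eq (x : ℝ) : gammaPDFReal 1 1 x = if 0 ≤ x then exp (-x) else 0 := by
  simp [gammaPDFReal, Real.Gamma_one, Real.one_rpow, Real.rpow_zero]

lemma ae_ne_zero : ∀ᵐ x : ℝ ∂volume, x ≠ 0 := by
  rw [ae_iff]
  simpa using Real.volume_singleton (a := 0)

lemma ae_eq_indicator (k : ℕ) :
    (fun x => gammaPDFReal 1 1 x * x ^ k) =ᵐ[volume]
      (Ioi (0:ℝ)).indicator (fun x => exp (-x) * x ^ (k:ℝ)) := by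
  filter_upwards [ae_ne_zero] with x hx
  rcases lt_or_gt_of_ne hx with h | h
  · rw [Set.indicator_of_notMem (by simpa using h.le), pdfReal_eq, if_neg (not_le.mpr h), zero_mul]
  · rw [Set.indicator_of_mem (Set.mem_Ioi.mpr h), pdfReal_eq, if_pos h.le, Real.rpow_natCast]

lemma integral_pow_nu (k : ℕ) : ∫ y, y ^ k ∂nu = (Nat.factorial k : ℝ) := by
  have hmeas : Measurable fun x => (gammaPDFReal 1 1 x).toNNReal :=
    measurable_real_toNNReal.comp (measurable_gammaPDFReal 1 1)
  have h1 : ∫ y, y ^ k ∂nu = ∫ x, gammaPDFReal 1 1 x * x ^ k := by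
    rw [nu_def, show gammaPDF 1 1 = fun x => ((gammaPDFReal 1 1 x).toNNReal : ℝ≥0∞) from rfl,
      integral_withDensity_eq_integral_smul hmeas]
    refine integral_congr_ae (Filter.Eventually.of_forall fun x => ?_)
    show (gammaPDFReal 1 1 x).toNNReal • x ^ k = gammaPDFReal 1 1 x * x ^ k
    rw [NNReal.smul_def, smul_eq_mul,
      Real.coe_toNNReal _ (gammaPDFReal_nonneg one_pos one_pos x)]
  rw [h1, integral_congr_ae (ae_eq_indicator k), integral_indicator measurableSet_Ioi]
  have h2 : ((k:ℝ) + 1) - 1 = (k:ℝ) := by ring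
  have := Real.Gamma_eq_integral (s := (k:ℝ) + 1) (by positivity)
  rw [h2] at this
  rw [← this]
  exact_mod_cast Real.Gamma_nat_eq_factorial k

lemma integrable_pow_nu (k : ℕ) : Integrable (fun y : ℝ => y ^ k) nu := by
  rw [nu_def, show gammaPDF 1 1 = fun x => ENNReal.ofReal (gammaPDFReal 1 1 x) from rfl,
    integrable_withDensity_iff
    ((measurable_gammaPDFReal 1 1).ennreal_ofReal)
    (Filter.Eventually.of_forall fun x => ENNReal.ofReal_lt_top)]
  have base : IntegrableOn (fun x : ℝ => exp (-x) * x ^ (k:ℝ)) (Ioi 0) := by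
    have := Real.GammaIntegral_convergent (s := (k:ℝ) + 1) (by positivity)
    simpa using this
  refine (((integrable_indicator_iff measurableSet_Ioi).mpr base)).congr ?_
  filter_upwards [ae_eq_indicator k] with x hx
  rw [← hx, ENNReal.toReal_ofReal (gammaPDFReal_nonneg one_pos one_pos x)]
  ring

section Pi

variable {n : ℕ}

noncomputable def piNu (n : ℕ) : Measure (Fin n → ℝ) := Measure.pi fun _ => nu

lemma pi_monomial_integrable (ℓ : Fin n → ℕ) :
    Integrable (fun y : Fin n → ℝ => ∏ i, (y i) ^ (ℓ i)) (piNu n) := by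
  letI : MeasureSpace ℝ := ⟨nu⟩
  haveI : SigmaFinite (volume : Measure ℝ) := inferInstanceAs (SigmaFinite nu)
  exact MeasureTheory.Integrable.fintype_prod (𝕜 := ℝ)
    (f := fun i (x : ℝ) => x ^ (ℓ i)) (fun i => integrable_pow_nu (ℓ i))

lemma pi_monomial_integral (ℓ : Fin n → ℕ) :
    ∫ y : Fin n → ℝ, ∏ i, (y i) ^ (ℓ i) ∂(piNu n) = ∏ i, (Nat.factorial (ℓ i) : ℝ) := by
  letI : MeasureSpace ℝ := ⟨nu⟩
  haveI : SigmaFinite (volume : Measure ℝ) := inferInstanceAs (SigmaFinite nu)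
  rw [show piNu n = Measure.pi (fun _ : Fin n => (volume : Measure ℝ)) from rfl,
    MeasureTheory.integral_fintype_prod_eq_prod (𝕜 := ℝ) (ι := Fin n)
      (f := fun i (x : ℝ) => x ^ (ℓ i))]
  exact Finset.prod_congr rfl fun i _ => integral_pow_nu (ℓ i)

lemma antidiagonalTuple_eq (n e : ℕ) :
    Finset.Nat.antidiagonalTuple n e = Finset.piAntidiag (univ : Finset (Fin n)) e := by
  ext ℓ
  simp [Finset.Nat.mem_antidiagonalTuple, Finset.mem_piAntidiag]

lemma expand (x : Fin n → ℝ) (e : ℕ) (y : Fin n → ℝ) :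
    (∑ i, y i * x i) ^ e =
      ∑ ℓ ∈ Finset.Nat.antidiagonalTuple n e,
        ((Nat.multinomial univ ℓ : ℝ) * ∏ i, x i ^ ℓ i) * ∏ i, y i ^ ℓ i := by
  rw [antidiagonalTuple_eq, Finset.sum_pow_eq_sum_piAntidiag]
  refine Finset.sum_congr rfl fun ℓ _ => ?_
  simp_rw [mul_pow]
  rw [Finset.prod_mul_distrib]
  ring

lemma lin_int (x : Fin n → ℝ) (e : ℕ) :
    Integrable (fun y : Fin n → ℝ => (∑ i, y i * x i) ^ e) (piNu n) := by
  simp_rw [expand x e]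
  exact integrable_finset_sum _ fun ℓ _ => (pi_monomial_integrable ℓ).const_mul _

lemma lin_int_val (x : Fin n → ℝ) (e : ℕ) :
    ∫ y : Fin n → ℝ, (∑ i, y i * x i) ^ e ∂(piNu n) =
      (Nat.factorial e : ℝ) * ∑ ℓ ∈ Finset.Nat.antidiagonalTuple n e, ∏ i, x i ^ ℓ i := by
  simp_rw [expand x e]
  rw [integral_finset_sum _ fun ℓ _ => (pi_monomial_integrable ℓ).const_mul _, Finset.mul_sum]
  refine Finset.sum_congr rfl fun ℓ hℓ => ?_
  rw [MeasureTheory.integral_const_mul, pi_monomial_integral]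
  have hsum : ∑ i, ℓ i = e := Finset.Nat.mem_antidiagonalTuple.mp hℓ
  have hfac : (∏ i, (Nat.factorial (ℓ i) : ℝ)) * (Nat.multinomial univ ℓ : ℝ) = (Nat.factorial e : ℝ) := by
    rw [← hsum]
    exact_mod_cast congrArg (Nat.cast (R := ℝ)) (Nat.multinomial_spec univ ℓ)
  linear_combination (∏ i, x i ^ ℓ i) * hfac

end Pi

lemma key {N : ℕ} (w X : Fin N → ℝ) (hw : ∀ i, 0 ≤ w i) (hw1 : ∑ i, w i = 1)
    (n d : ℕ) :
    0 ≤ ∑ ℓ ∈ Finset.Nat.antidiagonalTuple n (2 * d),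
        ((∏ i, (∑ j, w j * X j ^ ℓ i)) - (∑ j, w j * X j) ^ (2 * d)) := by
  classical
  set e := 2 * d with he_def
  set μ : ℝ := ∑ j, w j * X j with hμ
  set W : (Fin n → Fin N) → ℝ := fun a => ∏ i, w (a i) with hW
  -- swap products and sums
  have hswap : ∀ ℓ : Fin n → ℕ,
      (∏ i, (∑ j, w j * X j ^ ℓ i)) = ∑ a : Fin n → Fin N, W a * ∏ i, X (a i) ^ ℓ i := by
    intro ℓ
    rw [Fintype.prod_sum (f := fun (i : Fin n) (j : Fin N) => w j * X j ^ ℓ i)]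
    exact Finset.sum_congr rfl fun a _ => by rw [hW, ← Finset.prod_mul_distrib]
  have hW0 : ∀ a : Fin n → Fin N, 0 ≤ W a := fun a => Finset.prod_nonneg fun i _ => hw _
  have hW1 : ∑ a : Fin n → Fin N, W a = 1 := by
    rw [hW, ← Fintype.prod_sum (f := fun (_ : Fin n) (j : Fin N) => w j)]
    simp [hw1]
  have hproj : ∀ i₀ : Fin n, ∑ a : Fin n → Fin N, W a * X (a i₀) = μ := by
    intro i₀
    have h1 : ∀ a : Fin n → Fin N,
        W a * X (a i₀) = ∏ i, (w (a i) * (if i = i₀ then X (a i) else 1)) := by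
      intro a
      rw [Finset.prod_mul_distrib, Fintype.prod_ite_eq']
    simp_rw [h1]
    rw [← Fintype.prod_sum (f := fun (i : Fin n) (j : Fin N) => w j * (if i = i₀ then X j else 1))]
    have h2 : ∀ i : Fin n, (∑ j, w j * (if i = i₀ then X j else 1)) =
        if i = i₀ then μ else 1 := by
      intro i
      by_cases h : i = i₀ <;> simp [h, hw1, hμ]
    simp_rw [h2]
    rw [Fintype.prod_ite_eq']
  -- pointwise Jensen
  have jensen : ∀ y : Fin n → ℝ,
      (∑ i, y i * μ) ^ e ≤ ∑ a : Fin n → Fin N, W a * (∑ i, y i * X (a i)) ^ e := by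
    intro y
    have hconv : ConvexOn ℝ Set.univ (fun t : ℝ => t ^ e) := (even_two_mul d).convexOn_pow
    have hmean : ∑ a : Fin n → Fin N, W a • (∑ i, y i * X (a i)) = ∑ i, y i * μ := by
      simp_rw [smul_eq_mul, Finset.mul_sum]
      rw [Finset.sum_comm]
      refine Finset.sum_congr rfl fun i _ => ?_
      simp_rw [mul_left_comm (W _)]
      rw [← Finset.mul_sum, hproj i]
    have hj := hconv.map_sum_le (t := univ) (w := W)
      (p := fun a : Fin n → Fin N => ∑ i, y i * X (a i))
      (fun a _ => hW0 a) hW1 (fun a _ => Set.mem_univ _)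
    rw [hmean] at hj
    simpa [smul_eq_mul] using hj
  -- integral computation
  have hIntSum : Integrable
      (fun y : Fin n → ℝ => ∑ a : Fin n → Fin N, W a * (∑ i, y i * X (a i)) ^ e) (piNu n) :=
    integrable_finset_sum _ fun a _ => (lin_int _ e).const_mul _
  have hnonneg : 0 ≤ ∫ y : Fin n → ℝ,
      ((∑ a : Fin n → Fin N, W a * (∑ i, y i * X (a i)) ^ e) - (∑ i, y i * μ) ^ e) ∂(piNu n) :=
    integral_nonneg fun y => sub_nonneg.mpr (jensen y)
  have hval : ∫ y : Fin n → ℝ,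
      ((∑ a : Fin n → Fin N, W a * (∑ i, y i * X (a i)) ^ e) - (∑ i, y i * μ) ^ e) ∂(piNu n)
      = (Nat.factorial e : ℝ) * ∑ ℓ ∈ Finset.Nat.antidiagonalTuple n e,
          ((∏ i, (∑ j, w j * X j ^ ℓ i)) - μ ^ e) := by
    rw [integral_sub hIntSum (lin_int (fun _ => μ) e),
      integral_finset_sum _ fun a _ => (lin_int _ e).const_mul _]
    simp_rw [MeasureTheory.integral_const_mul, lin_int_val]
    have hmuval : ∀ ℓ ∈ Finset.Nat.antidiagonalTuple n e, (∏ i, μ ^ ℓ i) = μ ^ e := by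
      intro ℓ hℓ
      rw [Finset.prod_pow_eq_pow_sum, Finset.Nat.mem_antidiagonalTuple.mp hℓ]
    rw [Finset.sum_congr rfl hmuval]
    simp_rw [hswap]
    simp only [Finset.mul_sum, mul_sub, Finset.sum_sub_distrib]
    rw [Finset.sum_comm]
    congr 1
    refine Finset.sum_congr rfl fun ℓ _ => Finset.sum_congr rfl fun a _ => by ring
  have hT := hval ▸ hnonneg
  have hepos : (0:ℝ) < (Nat.factorial e : ℝ) := by exact_mod_cast Nat.factorial_pos e
  by_contra hcon
  push_neg at hcon
  nlinarith [hT, hepos, hcon]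

end MomentAux

/-- Moment form of inequality (5) of the paper: for a finitely valued random variable
`X` with mean `μ`,
`Σ_{d=1}^{⌊m/2⌋} Σ_{ℓ_1+⋯+ℓ_{m-2d+1}=2d} (Π_i E[X^{ℓ_i}] − μ^{2d}) ≥ 0`. -/
theorem moment_even_subgraph_sum_nonneg (N m : ℕ) (hN : 1 ≤ N) (hm : 2 ≤ m)
    (w X : Fin N → ℝ) (hw : ∀ i, 0 ≤ w i) (hw1 : ∑ i, w i = 1) :
    0 ≤ ∑ d ∈ Finset.Icc 1 (m / 2),
        ∑ ℓ ∈ Finset.Nat.antidiagonalTuple (m - 2 * d + 1) (2 * d),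
          ((∏ i, (∑ j, w j * X j ^ ℓ i)) - (∑ j, w j * X j) ^ (2 * d)) := by
  exact Finset.sum_nonneg fun d _ => MomentAux.key w X hw hw1 (m - 2 * d + 1) d
end

section
/- Let W be a real symmetric n×n matrix with entries in [0,1], m ≥ 3, and suppose trace(W^m)/n^m + trace((J−W)^m)/n^m ≤ 2^{1−m}(1+ε) for some ε ≥ 0, where J is the all-ones matrix. Let U = 2W − J. Then (1ᵀU²1)/n³ ≤ ε/(m−1). -/
open Finset Matrix

namespace CycleStab

/-- Generic re-nesting (swap) lemma for triple antidiagonal sums. -/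
lemma swapL0 (R : ℕ) (F : ℕ → ℕ → ℕ → ℝ) :
    ∑ p ∈ Finset.HasAntidiagonal.antidiagonal R, ∑ q ∈ Finset.HasAntidiagonal.antidiagonal p.2, F p.1 q.1 q.2
      = ∑ p ∈ Finset.HasAntidiagonal.antidiagonal R, ∑ q ∈ Finset.HasAntidiagonal.antidiagonal p.2, F q.1 p.1 q.2 := by
  rw [← Finset.sum_sigma (Finset.HasAntidiagonal.antidiagonal R) (fun p => Finset.HasAntidiagonal.antidiagonal p.2)
        (fun x => F x.1.1 x.2.1 x.2.2),
      ← Finset.sum_sigma (Finset.HasAntidiagonal.antidiagonal R) (fun p => Finset.HasAntidiagonal.antidiagonal p.2)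
        (fun x => F x.2.1 x.1.1 x.2.2)]
  refine Finset.sum_nbij' (fun x => ⟨(x.2.1, x.1.1 + x.2.2), (x.1.1, x.2.2)⟩)
    (fun x => ⟨(x.2.1, x.1.1 + x.2.2), (x.1.1, x.2.2)⟩) ?_ ?_ ?_ ?_ ?_
  · rintro ⟨⟨a, bc⟩, ⟨b, c⟩⟩ h
    simp only [Finset.mem_sigma, Finset.HasAntidiagonal.mem_antidiagonal] at h ⊢
    exact ⟨by omega, trivial⟩
  · rintro ⟨⟨a, bc⟩, ⟨b, c⟩⟩ h
    simp only [Finset.mem_sigma, Finset.HasAntidiagonal.mem_antidiagonal] at h ⊢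
    exact ⟨by omega, trivial⟩
  · rintro ⟨⟨a, bc⟩, ⟨b, c⟩⟩ h
    simp only [Finset.mem_sigma, Finset.HasAntidiagonal.mem_antidiagonal] at h
    simp only [Sigma.mk.inj_iff, Prod.mk.injEq, heq_eq_eq]
    exact ⟨⟨trivial, by omega⟩, trivial⟩
  · rintro ⟨⟨a, bc⟩, ⟨b, c⟩⟩ h
    simp only [Finset.mem_sigma, Finset.HasAntidiagonal.mem_antidiagonal] at h
    simp only [Sigma.mk.inj_iff, Prod.mk.injEq, heq_eq_eq]
    exact ⟨⟨trivial, by omega⟩, trivial⟩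
  · rintro ⟨⟨a, bc⟩, ⟨b, c⟩⟩ h
    rfl

lemma sum_antidiagonal_if_right (R : ℕ) (f : ℕ → ℕ → ℝ) :
    ∑ p ∈ Finset.HasAntidiagonal.antidiagonal R, f p.1 p.2 * (if p.2 = 0 then 1 else 0) = f R 0 := by
  rw [Finset.sum_eq_single (R, 0)]
  · simp
  · rintro ⟨a, b⟩ hab hne
    simp only [Finset.HasAntidiagonal.mem_antidiagonal] at hab
    have hb : b ≠ 0 := by
      intro h
      apply hne
      have : a = R := by omega
      simp [h, this]
    simp [hb]
  · intro h
    exfalso; apply h; simp [Finset.HasAntidiagonal.mem_antidiagonal]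

variable (s : ℕ → ℝ)

/-- Sum over compositions of `N` into `K` (nonnegative) parts of products of `s`. -/
def CC : ℕ → ℕ → ℝ
  | 0, N => if N = 0 then 1 else 0
  | K+1, N => ∑ p ∈ Finset.HasAntidiagonal.antidiagonal N, s p.1 * CC K p.2

/-- First-part-weighted composition sum. -/
def PP (K R : ℕ) : ℝ := ∑ p ∈ Finset.HasAntidiagonal.antidiagonal R, p.1 * s p.1 * CC s K p.2

/-- Last-part-(size+1)-weighted composition sum (K+1 parts, sum R). -/
def GG : ℕ → ℕ → ℝ
  | 0, R => (R+1) * s R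
  | K+1, R => ∑ p ∈ Finset.HasAntidiagonal.antidiagonal R, s p.1 * GG K p.2

/-- marked composition sums appearing in the expansion of walks. -/
def EE (i : ℕ) : ℕ → ℕ → ℝ
  | 0, N => s (N + i)
  | K+1, N => ∑ p ∈ Finset.HasAntidiagonal.antidiagonal N, s p.1 * EE i K p.2

@[simp] lemma CC_zero (N : ℕ) : CC s 0 N = if N = 0 then 1 else 0 := rfl
lemma CC_succ (K N : ℕ) : CC s (K+1) N = ∑ p ∈ Finset.HasAntidiagonal.antidiagonal N, s p.1 * CC s K p.2 := rfl
lemma GG_zero (R : ℕ) : GG s 0 R = (R+1) * s R := rfl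
lemma GG_succ (K R : ℕ) : GG s (K+1) R = ∑ p ∈ Finset.HasAntidiagonal.antidiagonal R, s p.1 * GG s K p.2 := rfl
lemma EE_zero (i N : ℕ) : EE s i 0 N = s (N + i) := rfl
lemma EE_succ (i K N : ℕ) : EE s i (K+1) N = ∑ p ∈ Finset.HasAntidiagonal.antidiagonal N, s p.1 * EE s i K p.2 := rfl

lemma CC_one (N : ℕ) : CC s 1 N = s N := by
  rw [CC_succ]
  simpa using sum_antidiagonal_if_right N (fun a b => s a)

lemma PP_zero (R : ℕ) : PP s 0 R = R * s R := by
  unfold PP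
  simpa using sum_antidiagonal_if_right R (fun a b => (a : ℝ) * s a)

lemma PP_succ (K R : ℕ) :
    PP s (K+1) R = ∑ p ∈ Finset.HasAntidiagonal.antidiagonal R, s p.1 * PP s K p.2 := by
  unfold PP
  simp only [CC_succ, Finset.mul_sum]
  have h := swapL0 R (fun a b c => (a : ℝ) * s a * (s b * CC s K c))
  calc ∑ p ∈ Finset.HasAntidiagonal.antidiagonal R, ∑ q ∈ Finset.HasAntidiagonal.antidiagonal p.2, (p.1 : ℝ) * s p.1 * (s q.1 * CC s K q.2)
      = ∑ p ∈ Finset.HasAntidiagonal.antidiagonal R, ∑ q ∈ Finset.HasAntidiagonal.antidiagonal p.2, (q.1 : ℝ) * s q.1 * (s p.1 * CC s K q.2) := h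
    _ = ∑ p ∈ Finset.HasAntidiagonal.antidiagonal R, ∑ q ∈ Finset.HasAntidiagonal.antidiagonal p.2, s p.1 * ((q.1:ℝ) * s q.1 * CC s K q.2) := by
        apply Finset.sum_congr rfl; intro p _; apply Finset.sum_congr rfl; intro q _; ring

lemma PP_mul (K R : ℕ) : (K + 1 : ℝ) * PP s K R = R * CC s (K+1) R := by
  induction K generalizing R with
  | zero =>
    rw [PP_zero, CC_one]
    push_cast
    ring
  | succ K ih =>
    have e1 : ((K:ℝ)+1) * PP s (K+1) R
        = ∑ p ∈ Finset.HasAntidiagonal.antidiagonal R, s p.1 * (((K:ℝ)+1) * PP s K p.2) := by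
      rw [PP_succ, Finset.mul_sum]
      apply Finset.sum_congr rfl; intro p _; ring
    have e2 : ∑ p ∈ Finset.HasAntidiagonal.antidiagonal R, s p.1 * (((K:ℝ)+1) * PP s K p.2)
        = ∑ p ∈ Finset.HasAntidiagonal.antidiagonal R, s p.1 * ((p.2 : ℝ) * CC s (K+1) p.2) := by
      apply Finset.sum_congr rfl; intro p _; rw [ih]
    have e3 : ((K+1:ℕ):ℝ) + 1 = (K:ℝ) + 1 + 1 := by push_cast; ring
    have e4 : ((K:ℝ)+1+1) * PP s (K+1) R = PP s (K+1) R + (((K:ℝ)+1) * PP s (K+1) R) := by ring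
    rw [e3, e4, e1, e2]
    unfold PP
    rw [CC_succ (s := s) (K+1) R, Finset.mul_sum, ← Finset.sum_add_distrib]
    apply Finset.sum_congr rfl
    rintro ⟨a, b⟩ hab
    simp only [Finset.HasAntidiagonal.mem_antidiagonal] at hab
    have hcast : (a : ℝ) + b = R := by exact_mod_cast congrArg (Nat.cast : ℕ → ℝ) hab
    simp only
    rw [← hcast]; ring

lemma GG_eq (K R : ℕ) : GG s K R = CC s (K+1) R + PP s K R := by
  induction K generalizing R with
  | zero =>
    rw [GG_zero, CC_one, PP_zero]
    push_cast
    ring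
  | succ K ih =>
    rw [GG_succ, CC_succ (s := s) (K+1) R, PP_succ, ← Finset.sum_add_distrib]
    apply Finset.sum_congr rfl; intro p _
    rw [ih]; ring

lemma GG_mul (K R : ℕ) : (K + 1 : ℝ) * GG s K R = (R + K + 1) * CC s (K+1) R := by
  rw [GG_eq, mul_add, PP_mul]; ring

/-- Decomposition of sums over `antidiagonalTuple (K+1)` by the first coordinate. -/
lemma sum_antidiagonalTuple_succ {M : Type*} [AddCommMonoid M] (K N : ℕ)
    (f : (Fin (K+1) → ℕ) → M) :
    ∑ g ∈ Finset.Nat.antidiagonalTuple (K+1) N, f g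
      = ∑ p ∈ Finset.HasAntidiagonal.antidiagonal N, ∑ g ∈ Finset.Nat.antidiagonalTuple K p.2,
          f (Fin.cons p.1 g) := by
  have step2 : ∑ x ∈ (Finset.HasAntidiagonal.antidiagonal N).sigma (fun p => Finset.Nat.antidiagonalTuple K p.2),
        f (Fin.cons x.1.1 x.2)
      = ∑ p ∈ Finset.HasAntidiagonal.antidiagonal N, ∑ g ∈ Finset.Nat.antidiagonalTuple K p.2,
          f (Fin.cons p.1 g) :=
    Finset.sum_sigma _ _ _
  rw [← step2]
  refine Finset.sum_nbij' (fun (g : Fin (K+1) → ℕ) => (⟨(g 0, ∑ t, g (Fin.succ t)), Fin.tail g⟩ :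
      Σ _p : ℕ × ℕ, (Fin K → ℕ)))
    (fun x => Fin.cons x.1.1 x.2) ?_ ?_ ?_ ?_ ?_
  · intro g hg
    simp only [Finset.Nat.mem_antidiagonalTuple] at hg
    simp only [Finset.mem_sigma, Finset.HasAntidiagonal.mem_antidiagonal, Finset.Nat.mem_antidiagonalTuple]
    exact ⟨by rw [← hg, Fin.sum_univ_succ], rfl⟩
  · rintro ⟨⟨a, b⟩, g⟩ h
    simp only [Finset.mem_sigma, Finset.HasAntidiagonal.mem_antidiagonal, Finset.Nat.mem_antidiagonalTuple] at h ⊢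
    rw [Fin.sum_univ_succ, Fin.cons_zero]
    simp only [Fin.cons_succ]
    omega
  · intro g _
    exact Fin.cons_self_tail g
  · rintro ⟨⟨a, b⟩, g⟩ h
    simp only [Finset.mem_sigma, Finset.HasAntidiagonal.mem_antidiagonal, Finset.Nat.mem_antidiagonalTuple] at h
    apply Sigma.ext <;>
      simp [Fin.tail_cons, Fin.cons_zero, Fin.cons_succ, h.2]
  · intro g hg
    simp only
    rw [Fin.cons_self_tail]

lemma CC_eq_tuple (s : ℕ → ℝ) (K N : ℕ) :
    CC s K N = ∑ g ∈ Finset.Nat.antidiagonalTuple K N, ∏ t, s (g t) := by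
  induction K generalizing N with
  | zero =>
    rcases Nat.eq_zero_or_pos N with h | h
    · subst h
      simp [Finset.Nat.antidiagonalTuple_zero_zero]
    · obtain ⟨N', rfl⟩ := Nat.exists_eq_succ_of_ne_zero (Nat.pos_iff_ne_zero.mp h)
      simp [Finset.Nat.antidiagonalTuple_zero_succ]
  | succ K ih =>
    rw [CC_succ, sum_antidiagonalTuple_succ]
    apply Finset.sum_congr rfl
    intro p _
    rw [ih, Finset.mul_sum]
    apply Finset.sum_congr rfl
    intro g _
    rw [Fin.prod_univ_succ, Fin.cons_zero]
    simp only [Fin.cons_succ]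

/-- Vandermonde in symmetric form, with extended range. -/
lemma vdm_coord (a b r : ℕ) (ha : a ≤ r) :
    (a + b).choose a = ∑ c ∈ Finset.range (r+1), a.choose c * b.choose c := by
  have h0 : (a + b).choose a = ∑ p ∈ Finset.HasAntidiagonal.antidiagonal a, a.choose p.1 * b.choose p.2 :=
    Nat.add_choose_eq a b a
  have h1 : ∑ p ∈ Finset.HasAntidiagonal.antidiagonal a, a.choose p.1 * b.choose p.2
      = ∑ p ∈ Finset.HasAntidiagonal.antidiagonal a, a.choose p.2 * b.choose p.2 := by
    apply Finset.sum_congr rfl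
    rintro ⟨i, j⟩ hij
    simp only [Finset.HasAntidiagonal.mem_antidiagonal] at hij
    have : a - j = i := by omega
    rw [← Nat.choose_symm (by omega : j ≤ a), this]
  have h2 : ∑ p ∈ Finset.HasAntidiagonal.antidiagonal a, a.choose p.2 * b.choose p.2
      = ∑ p ∈ Finset.HasAntidiagonal.antidiagonal a, a.choose p.1 * b.choose p.1 :=
    Finset.Nat.sum_antidiagonal_swap (f := fun p => a.choose p.1 * b.choose p.1)
  have h3 : ∑ p ∈ Finset.HasAntidiagonal.antidiagonal a, a.choose p.1 * b.choose p.1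
      = ∑ c ∈ Finset.range (a+1), a.choose c * b.choose c := by
    rw [Finset.Nat.sum_antidiagonal_eq_sum_range_succ (fun i _j => a.choose i * b.choose i) a]
  rw [h0, h1, h2, h3]
  apply Finset.sum_subset
  · exact Finset.range_subset_range.2 (by omega)
  · intro c _ hc
    simp only [Finset.mem_range, not_lt] at hc
    rw [Nat.choose_eq_zero_of_lt (by omega : a < c), zero_mul]

/-- Multidimensional Vandermonde. -/
lemma vdm_multi : ∀ (K : ℕ) (α : Fin K → ℕ) (r : ℕ),
    ∑ β ∈ Finset.Nat.antidiagonalTuple K r, ∏ t, (α t).choose (β t) = (∑ t, α t).choose r := by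
  intro K
  induction K with
  | zero =>
    intro α r
    rcases Nat.eq_zero_or_pos r with h | h
    · subst h; simp
    · obtain ⟨r', rfl⟩ := Nat.exists_eq_succ_of_ne_zero (Nat.pos_iff_ne_zero.mp h)
      simp [Finset.Nat.antidiagonalTuple_zero_succ]
  | succ K ih =>
    intro α r
    rw [sum_antidiagonalTuple_succ]
    have h1 : ∀ p : ℕ × ℕ, ∑ g ∈ Finset.Nat.antidiagonalTuple K p.2,
        ∏ t : Fin (K+1), (α t).choose ((Fin.cons p.1 g : Fin (K+1) → ℕ) t)
        = (α 0).choose p.1 * (∑ t : Fin K, α t.succ).choose p.2 := by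
      intro p
      rw [← ih (fun t => α t.succ) p.2, Finset.mul_sum]
      apply Finset.sum_congr rfl
      intro g _
      rw [Fin.prod_univ_succ, Fin.cons_zero]
      simp only [Fin.cons_succ]
    calc ∑ p ∈ Finset.HasAntidiagonal.antidiagonal r, ∑ g ∈ Finset.Nat.antidiagonalTuple K p.2,
          ∏ t : Fin (K+1), (α t).choose ((Fin.cons p.1 g : Fin (K+1) → ℕ) t)
        = ∑ p ∈ Finset.HasAntidiagonal.antidiagonal r, (α 0).choose p.1 * (∑ t : Fin K, α t.succ).choose p.2 := by
          exact Finset.sum_congr rfl fun p _ => h1 p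
      _ = (α 0 + ∑ t : Fin K, α t.succ).choose r := (Nat.add_choose_eq _ _ r).symm
      _ = (∑ t, α t).choose r := by rw [Fin.sum_univ_succ]

/-- Hunter-type positivity: even-level composition sums of a moment sequence are nonnegative. -/
lemma hunter_nonneg {ι : Type*} [Fintype ι] (u : ℕ → ι → ℝ) (s : ℕ → ℝ)
    (hs : ∀ a b, s (a + b) = ∑ x, u a x * u b x) (K r : ℕ) :
    0 ≤ ∑ g ∈ Finset.Nat.antidiagonalTuple K (r + r), ∏ t, s (g t) := by
  classical
  set B := Finset.Nat.antidiagonalTuple K r with hB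
  -- coordinate bound
  have hcoord : ∀ β ∈ B, ∀ t, β t ≤ r := by
    intro β hβ t
    rw [hB, Finset.Nat.mem_antidiagonalTuple] at hβ
    calc β t ≤ ∑ t', β t' := Finset.single_le_sum (fun _ _ => Nat.zero_le _) (Finset.mem_univ t)
      _ = r := hβ
  -- the key quadratic form identity
  have key1 : ∀ β ∈ B, ∀ γ ∈ B,
      (∏ t, (((β t + γ t).choose (β t) : ℝ) * s (β t + γ t)))
      = ∑ y ∈ Fintype.piFinset (fun _ : Fin K => (Finset.univ : Finset (Fin (r+1) × ι))),
          (∏ t, (((β t).choose ((y t).1 : ℕ) : ℝ) * u (β t) (y t).2)) *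
          (∏ t, (((γ t).choose ((y t).1 : ℕ) : ℝ) * u (γ t) (y t).2)) := by
    intro β hβ γ hγ
    have hper : ∀ t, (((β t + γ t).choose (β t) : ℝ) * s (β t + γ t))
        = ∑ p : Fin (r+1) × ι,
            (((β t).choose (p.1 : ℕ) : ℝ) * u (β t) p.2) *
            (((γ t).choose (p.1 : ℕ) : ℝ) * u (γ t) p.2) := by
      intro t
      have hv : (((β t + γ t).choose (β t) : ℕ) : ℝ)
          = ∑ c ∈ Finset.range (r+1), ((β t).choose c : ℝ) * ((γ t).choose c : ℝ) := by
        rw [vdm_coord (β t) (γ t) r (hcoord β hβ t)]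
        push_cast
        rfl
      rw [Fintype.sum_prod_type]
      have : ∀ c : Fin (r+1), ∑ x : ι,
          (((β t).choose (c : ℕ) : ℝ) * u (β t) x) * (((γ t).choose (c : ℕ) : ℝ) * u (γ t) x)
          = (((β t).choose (c : ℕ) : ℝ) * ((γ t).choose (c : ℕ) : ℝ)) * ∑ x : ι, u (β t) x * u (γ t) x := by
        intro c
        rw [Finset.mul_sum]
        apply Finset.sum_congr rfl
        intro x _
        ring
      rw [Finset.sum_congr rfl (fun c _ => this c)]
      rw [← Finset.sum_mul, hs]
      rw [hv]
      congr 1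
      rw [← Fin.sum_univ_eq_sum_range (fun c => ((β t).choose c : ℝ) * ((γ t).choose c : ℝ)) (r+1)]
    calc (∏ t, (((β t + γ t).choose (β t) : ℝ) * s (β t + γ t)))
        = ∏ t, ∑ p : Fin (r+1) × ι,
            (((β t).choose (p.1 : ℕ) : ℝ) * u (β t) p.2) *
            (((γ t).choose (p.1 : ℕ) : ℝ) * u (γ t) p.2) := by
          exact Finset.prod_congr rfl fun t _ => hper t
      _ = ∑ y ∈ Fintype.piFinset (fun _ : Fin K => (Finset.univ : Finset (Fin (r+1) × ι))),
            ∏ t, ((((β t).choose ((y t).1 : ℕ) : ℝ) * u (β t) (y t).2) *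
                  (((γ t).choose ((y t).1 : ℕ) : ℝ) * u (γ t) (y t).2)) :=
          Finset.prod_univ_sum _ _
      _ = ∑ y ∈ Fintype.piFinset (fun _ : Fin K => (Finset.univ : Finset (Fin (r+1) × ι))),
          (∏ t, (((β t).choose ((y t).1 : ℕ) : ℝ) * u (β t) (y t).2)) *
          (∏ t, (((γ t).choose ((y t).1 : ℕ) : ℝ) * u (γ t) (y t).2)) := by
          exact Finset.sum_congr rfl fun y _ => Finset.prod_mul_distrib
  -- sum the identity over β, γ and recognize a sum of squares
  have key2 : ∑ β ∈ B, ∑ γ ∈ B, (∏ t, (((β t + γ t).choose (β t) : ℝ) * s (β t + γ t)))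
      = ∑ y ∈ Fintype.piFinset (fun _ : Fin K => (Finset.univ : Finset (Fin (r+1) × ι))),
          (∑ β ∈ B, ∏ t, (((β t).choose ((y t).1 : ℕ) : ℝ) * u (β t) (y t).2)) ^ 2 := by
    rw [Finset.sum_congr rfl (fun β hβ => Finset.sum_congr rfl (fun γ hγ => key1 β hβ γ hγ))]
    rw [Finset.sum_congr rfl (fun β (_ : β ∈ B) => Finset.sum_comm)]
    rw [Finset.sum_comm]
    apply Finset.sum_congr rfl
    intro y _
    rw [sq, Finset.sum_mul_sum]
  -- fiberwise decomposition over the sum β + γ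
  have hmap : ∀ pq ∈ B ×ˢ B, pq.1 + pq.2 ∈ Finset.Nat.antidiagonalTuple K (r + r) := by
    rintro ⟨β, γ⟩ h
    rw [Finset.mem_product] at h
    rw [Finset.Nat.mem_antidiagonalTuple]
    have h1 := Finset.Nat.mem_antidiagonalTuple.1 h.1
    have h2 := Finset.Nat.mem_antidiagonalTuple.1 h.2
    simp only [Pi.add_apply]
    rw [Finset.sum_add_distrib, h1, h2]
  have key3 : ∑ β ∈ B, ∑ γ ∈ B, (∏ t, (((β t + γ t).choose (β t) : ℝ) * s (β t + γ t)))
      = ((r+r).choose r : ℝ) * ∑ g ∈ Finset.Nat.antidiagonalTuple K (r + r), ∏ t, s (g t) := by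
    rw [← Finset.sum_product']
    rw [← Finset.sum_fiberwise_of_maps_to hmap
      (fun pq => ∏ t, (((pq.1 t + pq.2 t).choose (pq.1 t) : ℝ) * s (pq.1 t + pq.2 t)))]
    rw [Finset.mul_sum]
    apply Finset.sum_congr rfl
    intro α hα
    -- rewrite each fiber term
    have hfib : ∀ pq ∈ (B ×ˢ B).filter (fun pq => pq.1 + pq.2 = α),
        (∏ t, (((pq.1 t + pq.2 t).choose (pq.1 t) : ℝ) * s (pq.1 t + pq.2 t)))
          = (∏ t, ((α t).choose (pq.1 t) : ℝ)) * ∏ t, s (α t) := by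
      rintro ⟨β, γ⟩ hpq
      rw [Finset.mem_filter] at hpq
      have hα' : ∀ t, β t + γ t = α t := fun t => congrFun hpq.2 t
      simp only []
      rw [← Finset.prod_mul_distrib]
      apply Finset.prod_congr rfl
      intro t _
      rw [hα' t]
    rw [Finset.sum_congr rfl hfib, ← Finset.sum_mul]
    -- compute the fiber sum of products of binomials
    have hfibsum : ∑ pq ∈ (B ×ˢ B).filter (fun pq => pq.1 + pq.2 = α),
        (∏ t, ((α t).choose (pq.1 t) : ℝ))
        = ∑ β ∈ B, ∏ t, ((α t).choose (β t) : ℝ) := by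
      have hstep : ∑ pq ∈ (B ×ˢ B).filter (fun pq => pq.1 + pq.2 = α),
          (∏ t, ((α t).choose (pq.1 t) : ℝ))
          = ∑ β ∈ B.filter (fun β => ∀ t, β t ≤ α t), ∏ t, ((α t).choose (β t) : ℝ) := by
        refine Finset.sum_nbij' (fun pq => pq.1) (fun β => (β, fun t => α t - β t)) ?_ ?_ ?_ ?_ ?_
        · rintro ⟨β, γ⟩ h
          rw [Finset.mem_filter, Finset.mem_product] at h
          rw [Finset.mem_filter]
          refine ⟨h.1.1, fun t => ?_⟩
          have := congrFun h.2 t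
          simp only [Pi.add_apply] at this
          show β t ≤ α t
          omega
        · intro β h
          rw [Finset.mem_filter] at h
          rw [Finset.mem_filter, Finset.mem_product]
          have hβ := Finset.Nat.mem_antidiagonalTuple.1 h.1
          have hαs := Finset.Nat.mem_antidiagonalTuple.1 hα
          refine ⟨⟨h.1, ?_⟩, ?_⟩
          · rw [Finset.Nat.mem_antidiagonalTuple]
            have : ∑ t, (α t - β t) = ∑ t, α t - ∑ t, β t := by
              apply Finset.sum_tsub_distrib
              intro t _
              exact h.2 t
            rw [this, hβ, hαs]
            omega
          · funext t
            simp only [Pi.add_apply]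
            exact Nat.add_sub_cancel' (h.2 t)
        · rintro ⟨β, γ⟩ h
          rw [Finset.mem_filter, Finset.mem_product] at h
          have hα' : ∀ t, β t + γ t = α t := fun t => congrFun h.2 t
          refine Prod.ext rfl ?_
          show (fun t => α t - β t) = γ
          funext t
          have := hα' t
          omega
        · intro β _
          rfl
        · rintro ⟨β, γ⟩ _
          rfl
      rw [hstep]
      apply Finset.sum_subset (Finset.filter_subset _ _)
      intro β hβ hβ'
      rw [Finset.mem_filter, not_and] at hβ'
      obtain ⟨t, ht⟩ := not_forall.1 (hβ' hβ)
      apply Finset.prod_eq_zero (Finset.mem_univ t)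
      rw [Nat.choose_eq_zero_of_lt (by omega), Nat.cast_zero]
    rw [hfibsum]
    have hcast : ∑ β ∈ B, ∏ t, ((α t).choose (β t) : ℝ)
        = (((∑ t, α t).choose r : ℕ) : ℝ) := by
      rw [← vdm_multi K α r]
      push_cast
      rfl
    rw [hcast, Finset.Nat.mem_antidiagonalTuple.1 hα, mul_comm]
  -- conclude
  have hpos : (0:ℝ) < ((r+r).choose r : ℝ) := by
    exact_mod_cast Nat.choose_pos (by omega)
  have hsq : 0 ≤ ∑ β ∈ B, ∑ γ ∈ B, (∏ t, (((β t + γ t).choose (β t) : ℝ) * s (β t + γ t))) := by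
    rw [key2]
    apply Finset.sum_nonneg
    intro y _
    exact sq_nonneg _
  rw [key3] at hsq
  exact nonneg_of_mul_nonneg_right hsq hpos

section GramCorollaries

variable {ι : Type*} [Fintype ι] (u : ℕ → ι → ℝ) (s : ℕ → ℝ)
  (hs : ∀ a b, s (a + b) = ∑ x, u a x * u b x)

include hs in
lemma CC_even_nonneg (K N : ℕ) (hN : Even N) : 0 ≤ CC s K N := by
  obtain ⟨r, rfl⟩ := hN
  rw [CC_eq_tuple]
  exact hunter_nonneg u s hs K r

lemma CC_N0 (K : ℕ) : CC s K 0 = s 0 ^ K := by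
  induction K with
  | zero => simp
  | succ K ih =>
    rw [CC_succ]
    rw [show (Finset.HasAntidiagonal.antidiagonal 0 : Finset (ℕ × ℕ)) = {(0,0)} from rfl]
    rw [Finset.sum_singleton, ih, pow_succ]
    ring

lemma CC_N1 (K : ℕ) : CC s (K+1) 1 = (K+1) * s 0 ^ K * s 1 := by
  induction K with
  | zero => rw [CC_one]; norm_num
  | succ K ih =>
    rw [CC_succ]
    rw [show (Finset.HasAntidiagonal.antidiagonal 1 : Finset (ℕ × ℕ)) = {(0,1),(1,0)} from rfl]
    rw [Finset.sum_insert (by decide), Finset.sum_singleton]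
    simp only
    rw [ih, CC_N0]
    push_cast
    ring

include hs in
lemma s0_nonneg : 0 ≤ s 0 := by
  have := hs 0 0
  simp only [Nat.add_zero] at this
  rw [this]
  exact Finset.sum_nonneg fun x _ => mul_self_nonneg _

include hs in
lemma s2_nonneg : 0 ≤ s 2 := by
  have := hs 1 1
  norm_num at this
  rw [this]
  exact Finset.sum_nonneg fun x _ => mul_self_nonneg _

include hs in
lemma CC2_lb (K : ℕ) : ((K:ℝ)+1) * s 0 ^ K * s 2 ≤ CC s (K+1) 2 := by
  induction K with
  | zero => rw [CC_one]; norm_num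
  | succ K ih =>
    rw [CC_succ]
    rw [show (Finset.HasAntidiagonal.antidiagonal 2 : Finset (ℕ × ℕ)) = {(0,2),(1,1),(2,0)} from rfl]
    rw [Finset.sum_insert (by decide), Finset.sum_insert (by decide), Finset.sum_singleton]
    simp only
    rw [CC_N1, CC_N0]
    have h1 : s 1 * ((K+1) * s 0 ^ K * s 1) = (K+1) * s 0 ^ K * (s 1 * s 1) := by ring
    have h2 : 0 ≤ (K+1:ℝ) * s 0 ^ K * (s 1 * s 1) :=
      mul_nonneg (mul_nonneg (by positivity) (pow_nonneg (s0_nonneg u s hs) K)) (mul_self_nonneg _)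
    have h3 : s 0 * (((K:ℝ)+1) * s 0 ^ K * s 2) ≤ s 0 * CC s (K+1) 2 :=
      mul_le_mul_of_nonneg_left ih (s0_nonneg u s hs)
    have h4 : ((K:ℝ)+1+1) * s 0 ^ (K+1) * s 2 = s 0 * (((K:ℝ)+1) * s 0 ^ K * s 2) + s 0 ^ (K+1) * s 2 := by
      ring
    push_cast
    rw [h4, h1]
    have h5 : s 0 ^ (K+1) * s 2 = s 2 * s 0 ^ (K+1) := by ring
    nlinarith [h2, h3, mul_nonneg (pow_nonneg (s0_nonneg u s hs) (K+1)) (s2_nonneg u s hs)]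

include hs in
lemma GG_nonneg (K R : ℕ) (hR : Even R) : 0 ≤ GG s K R := by
  have h := GG_mul s K R
  have h1 : 0 ≤ ((R:ℝ) + K + 1) * CC s (K+1) R :=
    mul_nonneg (by positivity) (CC_even_nonneg u s hs (K+1) R hR)
  nlinarith [h, h1]

end GramCorollaries

section MatrixLayer

variable {n : ℕ}

/-- total sum of the entries of a matrix -/
def SS (M : Matrix (Fin n) (Fin n) ℝ) : ℝ := ∑ i, ∑ j, M i j

lemma SS_smul (r : ℝ) (M : Matrix (Fin n) (Fin n) ℝ) : SS (r • M) = r * SS M := by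
  unfold SS
  simp [Finset.mul_sum, Matrix.smul_apply, smul_eq_mul]

lemma SS_add (M N : Matrix (Fin n) (Fin n) ℝ) : SS (M + N) = SS M + SS N := by
  unfold SS
  simp [Finset.sum_add_distrib]

lemma SS_sum {β : Type*} (t : Finset β) (f : β → Matrix (Fin n) (Fin n) ℝ) :
    SS (∑ b ∈ t, f b) = ∑ b ∈ t, SS (f b) := by
  unfold SS
  simp only [Matrix.sum_apply]
  calc ∑ i, ∑ j, ∑ b ∈ t, f b i j
      = ∑ i, ∑ b ∈ t, ∑ j, f b i j := by
        exact Finset.sum_congr rfl fun i _ => Finset.sum_comm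
    _ = ∑ b ∈ t, ∑ i, ∑ j, f b i j := Finset.sum_comm

/-- all-ones matrix -/
def JJ (n : ℕ) : Matrix (Fin n) (Fin n) ℝ := Matrix.of fun _ _ => 1

lemma SS_AJB (A B : Matrix (Fin n) (Fin n) ℝ) : SS (A * JJ n * B) = SS A * SS B := by
  unfold SS JJ
  simp only [Matrix.mul_apply, Matrix.of_apply, mul_one]
  have h1 : ∀ i, ∑ j, ∑ l, (∑ k, A i k) * B l j = (∑ k, A i k) * ∑ l, ∑ j, B l j := by
    intro i
    rw [Finset.sum_comm, Finset.mul_sum]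
    apply Finset.sum_congr rfl
    intro l _
    rw [Finset.mul_sum]
  calc ∑ i, ∑ j, ∑ l, (∑ k, A i k) * B l j
      = ∑ i, (∑ k, A i k) * ∑ l, ∑ j, B l j := Finset.sum_congr rfl fun i _ => h1 i
    _ = (∑ i, ∑ k, A i k) * ∑ l, ∑ j, B l j := (Finset.sum_mul _ _ _).symm

lemma trace_AJB (A B : Matrix (Fin n) (Fin n) ℝ) :
    (A * JJ n * B).trace = SS (B * A) := by
  unfold SS JJ
  simp only [Matrix.trace, Matrix.diag_apply, Matrix.mul_apply, Matrix.of_apply, mul_one]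
  calc ∑ i, ∑ l, (∑ k, A i k) * B l i
      = ∑ i, ∑ l, ∑ k, B l i * A i k := by
        apply Finset.sum_congr rfl; intro i _
        apply Finset.sum_congr rfl; intro l _
        rw [Finset.sum_mul]
        apply Finset.sum_congr rfl; intro k _
        ring
    _ = ∑ l, ∑ i, ∑ k, B l i * A i k := Finset.sum_comm
    _ = ∑ l, ∑ k, ∑ i, B l i * A i k := Finset.sum_congr rfl fun l _ => Finset.sum_comm

/-- noncommutative telescoping -/
lemma tele {R : Type*} [Ring R] (X Y : R) (b : ℕ) :
    X ^ (b+1) = Y ^ (b+1) + ∑ p ∈ Finset.HasAntidiagonal.antidiagonal b, Y ^ p.1 * (X - Y) * X ^ p.2 := by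
  induction b with
  | zero => simp
  | succ b ih =>
    have hc : ∀ p : ℕ × ℕ, Y * (Y ^ p.1 * (X - Y) * X ^ p.2)
        = Y ^ (p.1 + 1) * (X - Y) * X ^ p.2 := by
      intro p
      simp [pow_succ', mul_assoc]
    have h2 : X ^ (b+1+1) = Y * X ^ (b+1) + (X - Y) * X ^ (b+1) := by
      rw [sub_mul, pow_succ' X (b+1)]
      abel
    rw [Finset.Nat.antidiagonal_succ, Finset.sum_cons, Finset.sum_map]
    simp only [Function.Embedding.coe_prodMap, Function.Embedding.coeFn_mk,
      Function.Embedding.refl_apply, Prod.map_fst, Prod.map_snd, pow_zero, one_mul,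
      Nat.succ_eq_add_one]
    rw [h2]
    nth_rewrite 1 [ih]
    rw [mul_add, Finset.mul_sum]
    rw [Finset.sum_congr rfl fun p _ => hc p, ← pow_succ']
    abel

end MatrixLayer

lemma EE_sum (s : ℕ → ℝ) (K x : ℕ) :
    ∑ p ∈ Finset.HasAntidiagonal.antidiagonal x, EE s p.1 K p.2 = GG s K x := by
  induction K generalizing x with
  | zero =>
    rw [GG_zero]
    have h : ∀ p ∈ Finset.HasAntidiagonal.antidiagonal x, EE s p.1 0 p.2 = s x := by
      rintro ⟨i, N⟩ h
      rw [Finset.HasAntidiagonal.mem_antidiagonal] at h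
      rw [EE_zero]
      congr 1
      omega
    rw [Finset.sum_congr rfl h, Finset.sum_const, Finset.Nat.card_antidiagonal]
    push_cast
    ring
  | succ K ih =>
    have h : ∀ p ∈ Finset.HasAntidiagonal.antidiagonal x, EE s p.1 (K+1) p.2
        = ∑ q ∈ Finset.HasAntidiagonal.antidiagonal p.2, s q.1 * EE s p.1 K q.2 := fun p _ => EE_succ s p.1 K p.2
    rw [Finset.sum_congr rfl h]
    have := swapL0 x (fun a b c => s b * EE s a K c)
    rw [this, GG_succ]
    apply Finset.sum_congr rfl
    intro p _
    rw [← ih p.2, Finset.mul_sum]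

section Main

variable {n : ℕ} (U : Matrix (Fin n) (Fin n) ℝ)

/-- moment sequence of `U` against the all-ones vector -/
def sU (a : ℕ) : ℝ := SS (U ^ a)

/-- row sums of powers of `U` -/
def uU (a : ℕ) (x : Fin n) : ℝ := ∑ j, (U ^ a) x j

lemma pow_symm (hU : Uᵀ = U) (a : ℕ) : (U ^ a)ᵀ = U ^ a := by
  rw [Matrix.transpose_pow, hU]

lemma gram (hU : Uᵀ = U) : ∀ a b, sU U (a + b) = ∑ x, uU U a x * uU U b x := by
  intro a b
  unfold sU uU SS
  rw [pow_add]
  simp only [Matrix.mul_apply]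
  calc ∑ i, ∑ j, ∑ x, (U^a) i x * (U^b) x j
      = ∑ i, ∑ x, ∑ j, (U^a) i x * (U^b) x j :=
        Finset.sum_congr rfl fun i _ => Finset.sum_comm
    _ = ∑ x, ∑ i, ∑ j, (U^a) i x * (U^b) x j := Finset.sum_comm
    _ = ∑ x, ((∑ i, (U^a) x i) * ∑ j, (U^b) x j) := by
        apply Finset.sum_congr rfl
        intro x _
        rw [Finset.sum_mul]
        apply Finset.sum_congr rfl
        intro i _
        rw [Finset.mul_sum]
        have hxi : (U^a) i x = (U^a) x i := by
          conv_lhs => rw [← pow_symm U hU a]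
          rfl
        rw [hxi]

/-- the quantity `1ᵀ (J+σU)^b U^i 1` -/
def ww (σ : ℝ) (b i : ℕ) : ℝ := SS ((JJ n + σ • U) ^ b * U ^ i)

lemma ww_zero (σ : ℝ) (i : ℕ) : ww U σ 0 i = sU U i := by
  unfold ww sU
  rw [pow_zero, one_mul]

lemma ww_succ (σ : ℝ) (b i : ℕ) :
    ww U σ (b+1) i = σ^(b+1) * sU U (b+1+i)
      + ∑ p ∈ Finset.HasAntidiagonal.antidiagonal b, σ^p.1 * sU U p.1 * ww U σ p.2 i := by
  unfold ww sU
  have ht := tele (JJ n + σ • U) (σ • U) b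
  rw [add_sub_cancel_right] at ht
  rw [ht, add_mul, Finset.sum_mul, SS_add, SS_sum]
  congr 1
  · rw [smul_pow, smul_mul_assoc, SS_smul, ← pow_add]
  · apply Finset.sum_congr rfl
    intro p _
    have h1 : (σ • U) ^ p.1 * JJ n * (JJ n + σ • U) ^ p.2 * U ^ i
        = σ ^ p.1 • (U ^ p.1 * JJ n * ((JJ n + σ • U) ^ p.2 * U ^ i)) := by
      rw [smul_pow]
      rw [smul_mul_assoc, smul_mul_assoc, smul_mul_assoc, mul_assoc]
    rw [h1, SS_smul, SS_AJB]
    ring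

lemma ww_closed (σ : ℝ) (b i : ℕ) :
    ww U σ b i = ∑ p ∈ Finset.HasAntidiagonal.antidiagonal b, σ^p.2 * EE (sU U) i p.1 p.2 := by
  induction b using Nat.strong_induction_on generalizing i with
  | _ b IH =>
    match b with
    | 0 =>
      rw [ww_zero]
      rw [show (Finset.HasAntidiagonal.antidiagonal 0 : Finset (ℕ × ℕ)) = {(0,0)} from rfl, Finset.sum_singleton]
      rw [EE_zero, pow_zero, one_mul, Nat.zero_add]
    | b+1 =>
      rw [ww_succ]
      have hIH : ∀ p ∈ Finset.HasAntidiagonal.antidiagonal b, σ^p.1 * sU U p.1 * ww U σ p.2 i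
          = ∑ q ∈ Finset.HasAntidiagonal.antidiagonal p.2, σ^(p.1) * sU U p.1 * (σ^q.2 * EE (sU U) i q.1 q.2) := by
        intro p hp
        rw [Finset.HasAntidiagonal.mem_antidiagonal] at hp
        rw [IH p.2 (by omega), Finset.mul_sum]
      rw [Finset.sum_congr rfl hIH]
      have hL : ∀ p ∈ Finset.HasAntidiagonal.antidiagonal b, ∀ q ∈ Finset.HasAntidiagonal.antidiagonal p.2,
          σ^(p.1) * sU U p.1 * (σ^q.2 * EE (sU U) i q.1 q.2)
          = σ^(p.1 + q.2) * sU U p.1 * EE (sU U) i q.1 q.2 := by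
        intro p _ q _
        rw [pow_add]
        ring
      rw [Finset.sum_congr rfl (fun p hp => Finset.sum_congr rfl (hL p hp))]
      have hswap := swapL0 b (fun a b' c => σ^(a + c) * sU U a * EE (sU U) i b' c)
      rw [hswap]
      -- now identify with the target via antidiagonal_succ
      rw [Finset.Nat.antidiagonal_succ, Finset.sum_cons, Finset.sum_map]
      simp only [Function.Embedding.coe_prodMap, Function.Embedding.coeFn_mk,
        Function.Embedding.refl_apply, Prod.map_fst, Prod.map_snd, Nat.succ_eq_add_one]
      rw [EE_zero]
      congr 1
      apply Finset.sum_congr rfl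
      intro p hp
      rw [Finset.HasAntidiagonal.mem_antidiagonal] at hp
      rw [EE_succ, Finset.mul_sum]
      apply Finset.sum_congr rfl
      intro q hq
      rw [Finset.HasAntidiagonal.mem_antidiagonal] at hq
      have hσ : σ ^ p.2 = σ ^ (q.1 + q.2) := by rw [hq]
      rw [hσ, pow_add]
      ring

lemma trace_expand (σ : ℝ) (b : ℕ) :
    ((JJ n + σ • U) ^ (b+1)).trace
      = σ^(b+1) * (U^(b+1)).trace + ∑ p ∈ Finset.HasAntidiagonal.antidiagonal b, σ^p.2 * GG (sU U) p.1 p.2 := by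
  have ht := tele (JJ n + σ • U) (σ • U) b
  rw [add_sub_cancel_right] at ht
  rw [ht, Matrix.trace_add, Matrix.trace_sum]
  congr 1
  · rw [smul_pow, Matrix.trace_smul, smul_eq_mul]
  · have h1 : ∀ p ∈ Finset.HasAntidiagonal.antidiagonal b, ((σ • U)^p.1 * JJ n * (JJ n + σ • U)^p.2).trace
        = σ^p.1 * ww U σ p.2 p.1 := by
      intro p _
      rw [smul_pow, smul_mul_assoc, smul_mul_assoc, Matrix.trace_smul, trace_AJB, smul_eq_mul]
      rfl
    rw [Finset.sum_congr rfl h1]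
    have h2 : ∀ p ∈ Finset.HasAntidiagonal.antidiagonal b, σ^p.1 * ww U σ p.2 p.1
        = ∑ q ∈ Finset.HasAntidiagonal.antidiagonal p.2, σ^(p.1 + q.2) * EE (sU U) p.1 q.1 q.2 := by
      intro p _
      rw [ww_closed, Finset.mul_sum]
      apply Finset.sum_congr rfl
      intro q _
      rw [pow_add]
      ring
    rw [Finset.sum_congr rfl h2]
    rw [swapL0 b (fun a b' c => σ^(a + c) * EE (sU U) a b' c)]
    apply Finset.sum_congr rfl
    intro p _
    rw [← EE_sum (sU U) p.1 p.2, Finset.mul_sum]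
    apply Finset.sum_congr rfl
    intro q hq
    rw [Finset.HasAntidiagonal.mem_antidiagonal] at hq
    rw [← hq, pow_add]

lemma SS_one (n : ℕ) : SS (1 : Matrix (Fin n) (Fin n) ℝ) = n := by
  unfold SS
  simp [Matrix.one_apply]

lemma sU_zero : sU U 0 = n := by
  unfold sU
  rw [pow_zero]
  exact SS_one n

lemma trace_parity (hU : Uᵀ = U) (m : ℕ) :
    0 ≤ (U ^ m).trace + (-1:ℝ)^m * (U^m).trace := by
  rcases Nat.even_or_odd m with he | ho
  · rw [he.neg_one_pow, one_mul]
    obtain ⟨t, ht⟩ := he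
    have hsplit : U ^ m = U ^ t * U ^ t := by rw [← pow_add, ← ht]
    have htr : 0 ≤ (U ^ m).trace := by
      rw [hsplit]
      have : (U ^ t * U ^ t).trace = ∑ i, ∑ j, ((U^t) i j)^2 := by
        simp only [Matrix.trace, Matrix.diag_apply, Matrix.mul_apply]
        apply Finset.sum_congr rfl
        intro i _
        apply Finset.sum_congr rfl
        intro j _
        have : (U^t) j i = (U^t) i j := by
          calc (U^t) j i = (U^t)ᵀ i j := (Matrix.transpose_apply _ _ _).symm
            _ = (U^t) i j := by rw [pow_symm U hU t]
        rw [this, sq]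
      rw [this]
      apply Finset.sum_nonneg
      intro i _
      exact Finset.sum_nonneg fun j _ => sq_nonneg _
    linarith
  · rw [ho.neg_one_pow]
    ring_nf
    exact le_refl 0

lemma main_lb (hn : 0 < n) (hU : Uᵀ = U) (k : ℕ) :
    2*((n:ℝ))^(k+3) + 2*((k:ℝ)+3)*((n:ℝ))^k * sU U 2
      ≤ ((JJ n + U)^(k+3)).trace + ((JJ n - U)^(k+3)).trace := by
  have hgram := gram U hU
  have h1 := trace_expand U 1 (k+2)
  have h2 := trace_expand U (-1) (k+2)
  rw [one_smul] at h1
  rw [show JJ n + (-1:ℝ) • U = JJ n - U by rw [neg_one_smul, ← sub_eq_add_neg]] at h2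
  have e : k + 2 + 1 = k + 3 := rfl
  rw [e] at h1 h2
  rw [h1, h2]
  simp only [one_pow, one_mul]
  -- the combined GG sum
  have hcomb : ∑ p ∈ Finset.HasAntidiagonal.antidiagonal (k+2), GG (sU U) p.1 p.2
        + ∑ p ∈ Finset.HasAntidiagonal.antidiagonal (k+2), (-1:ℝ)^p.2 * GG (sU U) p.1 p.2
      = ∑ p ∈ Finset.HasAntidiagonal.antidiagonal (k+2), (1 + (-1:ℝ)^p.2) * GG (sU U) p.1 p.2 := by
    rw [← Finset.sum_add_distrib]
    apply Finset.sum_congr rfl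
    intro p _
    ring
  have hterm : ∀ p ∈ Finset.HasAntidiagonal.antidiagonal (k+2), 0 ≤ (1 + (-1:ℝ)^p.2) * GG (sU U) p.1 p.2 := by
    intro p _
    rcases Nat.even_or_odd p.2 with he' | ho'
    · rw [he'.neg_one_pow]
      have := GG_nonneg (uU U) (sU U) hgram p.1 p.2 he'
      linarith
    · rw [ho'.neg_one_pow]
      norm_num
  have hpairsub : ({((k+2 : ℕ), (0:ℕ)), ((k:ℕ), (2:ℕ))} : Finset (ℕ × ℕ))
      ⊆ Finset.HasAntidiagonal.antidiagonal (k+2) := by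
    intro p hp
    simp only [Finset.mem_insert, Finset.mem_singleton] at hp
    rcases hp with rfl | rfl <;> simp [Finset.HasAntidiagonal.mem_antidiagonal]
  have hnotmem : ((k+2 : ℕ), (0:ℕ)) ∉ ({((k:ℕ), (2:ℕ))} : Finset (ℕ × ℕ)) := by
    simp
  have hsum_pair : ∑ p ∈ ({((k+2 : ℕ), (0:ℕ)), ((k:ℕ), (2:ℕ))} : Finset (ℕ × ℕ)),
        (1 + (-1:ℝ)^p.2) * GG (sU U) p.1 p.2
      = (1 + (-1:ℝ)^(0:ℕ)) * GG (sU U) (k+2) 0 + (1 + (-1:ℝ)^(2:ℕ)) * GG (sU U) k 2 := by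
    rw [Finset.sum_insert hnotmem, Finset.sum_singleton]
  have hsuble : ∑ p ∈ ({((k+2 : ℕ), (0:ℕ)), ((k:ℕ), (2:ℕ))} : Finset (ℕ × ℕ)),
        (1 + (-1:ℝ)^p.2) * GG (sU U) p.1 p.2
      ≤ ∑ p ∈ Finset.HasAntidiagonal.antidiagonal (k+2), (1 + (-1:ℝ)^p.2) * GG (sU U) p.1 p.2 :=
    Finset.sum_le_sum_of_subset_of_nonneg hpairsub (fun p hp _ => hterm p hp)
  -- value of GG (k+2) 0
  have hGG0 : GG (sU U) (k+2) 0 = (n:ℝ)^(k+3) := by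
    have hm := GG_mul (sU U) (k+2) 0
    have hcoef : ((k+2:ℕ):ℝ) + 1 = (((0:ℕ)):ℝ) + ((k+2:ℕ):ℝ) + 1 := by push_cast; ring
    rw [← hcoef] at hm
    have hne : ((k+2:ℕ):ℝ) + 1 ≠ 0 := by push_cast; positivity
    have := mul_left_cancel₀ hne hm
    rw [this, CC_N0, sU_zero]
  -- lower bound for GG k 2
  have hGG2 : ((k:ℝ)+3) * (n:ℝ)^k * sU U 2 ≤ GG (sU U) k 2 := by
    have hm := GG_mul (sU U) k 2
    have hcc := CC2_lb (uU U) (sU U) hgram k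
    rw [sU_zero] at hcc
    have h2k : ((2:ℕ):ℝ) + k + 1 = (k:ℝ) + 3 := by push_cast; ring
    rw [h2k] at hm
    nlinarith [hcc, hm, Nat.cast_nonneg (α := ℝ) k]
  -- trace parity part
  have hA := trace_parity U hU (k+3)
  -- put everything together
  have hval0 : (1 + (-1:ℝ)^(0:ℕ)) = 2 := by norm_num
  have hval2 : (1 + (-1:ℝ)^(2:ℕ)) = 2 := by norm_num
  rw [hval0, hval2, hGG0] at hsum_pair
  have : 2*((n:ℝ))^(k+3) + 2*((k:ℝ)+3)*((n:ℝ))^k * sU U 2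
      ≤ ∑ p ∈ Finset.HasAntidiagonal.antidiagonal (k+2), (1 + (-1:ℝ)^p.2) * GG (sU U) p.1 p.2 := by
    calc 2*((n:ℝ))^(k+3) + 2*((k:ℝ)+3)*((n:ℝ))^k * sU U 2
        ≤ 2 * (n:ℝ)^(k+3) + 2 * GG (sU U) k 2 := by nlinarith [hGG2]
      _ = ∑ p ∈ ({((k+2 : ℕ), (0:ℕ)), ((k:ℕ), (2:ℕ))} : Finset (ℕ × ℕ)),
            (1 + (-1:ℝ)^p.2) * GG (sU U) p.1 p.2 := by rw [hsum_pair]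
      _ ≤ _ := hsuble
  rw [← hcomb] at this
  linarith

end Main

end CycleStab

open CycleStab in
/-- Matrix form of the stability theorem for cycles: if the monochromatic cycle density
is within a factor `1+ε` of the random bound `2^{1−m}`, then `U = 2W − J` satisfies
`(1ᵀ U² 1)/n³ ≤ ε/(m−1)`. -/
theorem cycle_stability (n : ℕ) (hn : 0 < n) (m : ℕ) (hm : 3 ≤ m) (ε : ℝ) (hε : 0 ≤ ε)
    (W : Matrix (Fin n) (Fin n) ℝ) (hW : W.IsSymm)
    (hW01 : ∀ i j, W i j ∈ Set.Icc (0 : ℝ) 1)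
    (hle : (W ^ m).trace / (n : ℝ) ^ m +
        (((Matrix.of fun _ _ => (1 : ℝ)) - W) ^ m).trace / (n : ℝ) ^ m ≤
      (2 : ℝ) ^ (1 - (m : ℤ)) * (1 + ε)) :
    ((fun _ => (1 : ℝ)) ⬝ᵥ
        (((2 : ℝ) • W - Matrix.of fun _ _ => (1 : ℝ)) ^ 2).mulVec (fun _ => (1 : ℝ))) /
        (n : ℝ) ^ 3 ≤ ε / ((m : ℝ) - 1) := by
  obtain ⟨k, rfl⟩ : ∃ k, m = k + 3 := ⟨m - 3, by omega⟩
  set U : Matrix (Fin n) (Fin n) ℝ := (2 : ℝ) • W - Matrix.of fun _ _ => (1 : ℝ) with hUdef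
  have hJ : JJ n = (Matrix.of fun _ _ => (1 : ℝ)) := rfl
  have hU : Uᵀ = U := by
    rw [hUdef, Matrix.transpose_sub, Matrix.transpose_smul, hW.eq]
    congr 1
  -- identify the dot product with SS
  have hdot : ((fun _ => (1 : ℝ)) ⬝ᵥ (U ^ 2).mulVec (fun _ => (1 : ℝ))) = sU U 2 := by
    unfold sU SS
    simp [dotProduct, Matrix.mulVec]
  -- matrix identifications
  have hplus : JJ n + U = (2 : ℝ) • W := by
    rw [hUdef, hJ]
    module
  have hminus : JJ n - U = (2 : ℝ) • ((Matrix.of fun _ _ => (1 : ℝ)) - W) := by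
    rw [hUdef, hJ]
    module
  have htr1 : ((JJ n + U) ^ (k+3)).trace = 2^(k+3) * (W ^ (k+3)).trace := by
    rw [hplus, smul_pow, Matrix.trace_smul, smul_eq_mul]
  have htr2 : ((JJ n - U) ^ (k+3)).trace
      = 2^(k+3) * (((Matrix.of fun _ _ => (1 : ℝ)) - W) ^ (k+3)).trace := by
    rw [hminus, smul_pow, Matrix.trace_smul, smul_eq_mul]
  -- convert the hypothesis
  have hnpow : (0:ℝ) < (n:ℝ)^(k+3) := by positivity
  have hle' : (W ^ (k+3)).trace + (((Matrix.of fun _ _ => (1 : ℝ)) - W) ^ (k+3)).trace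
      ≤ (2 : ℝ) ^ (1 - ((k+3 : ℕ) : ℤ)) * (1 + ε) * (n:ℝ)^(k+3) := by
    rw [← add_div, div_le_iff₀ hnpow] at hle
    exact hle
  have hzpow : (2 : ℝ) ^ (1 - ((k+3 : ℕ) : ℤ)) = 2 / 2^(k+3) := by
    rw [zpow_sub₀ (two_ne_zero), zpow_one, zpow_natCast]
  have hcomb : ((JJ n + U) ^ (k+3)).trace + ((JJ n - U) ^ (k+3)).trace
      ≤ 2 * (1 + ε) * (n:ℝ)^(k+3) := by
    rw [htr1, htr2, ← mul_add]
    calc (2:ℝ)^(k+3) * ((W ^ (k+3)).trace + (((Matrix.of fun _ _ => (1 : ℝ)) - W) ^ (k+3)).trace)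
        ≤ 2^(k+3) * ((2 : ℝ) ^ (1 - ((k+3 : ℕ) : ℤ)) * (1 + ε) * (n:ℝ)^(k+3)) := by
          apply mul_le_mul_of_nonneg_left hle' (by positivity)
      _ = 2 * (1 + ε) * (n:ℝ)^(k+3) := by
          rw [hzpow]
          field_simp
  have hlb := main_lb U hn hU k
  -- s2 ≥ 0
  have hgram := gram U hU
  have hs2 : 0 ≤ sU U 2 := s2_nonneg (uU U) (sU U) hgram
  -- extract the inequality (k+3) * n^k * s2 ≤ ε * n^(k+3)
  have hkey : ((k:ℝ)+3) * (n:ℝ)^k * sU U 2 ≤ ε * (n:ℝ)^(k+3) := by nlinarith [hlb, hcomb]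
  have hnk : (0:ℝ) < (n:ℝ)^k := by positivity
  have hn3 : (0:ℝ) < (n:ℝ)^3 := by positivity
  have hsplit : (n:ℝ)^(k+3) = (n:ℝ)^k * (n:ℝ)^3 := by rw [pow_add]
  have hkey2 : ((k:ℝ)+3) * sU U 2 ≤ ε * (n:ℝ)^3 := by
    have h := hkey
    rw [hsplit] at h
    nlinarith [h, hnk]
  -- finish
  rw [hdot, div_le_div_iff₀ hn3 (by push_cast; linarith : (0:ℝ) < ((k+3 : ℕ):ℝ) - 1)]
  have : sU U 2 * (((k+3:ℕ):ℝ) - 1) ≤ ((k:ℝ)+3) * sU U 2 := by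
    push_cast
    nlinarith [hs2]
  calc sU U 2 * (((k+3:ℕ):ℝ) - 1) ≤ ((k:ℝ)+3) * sU U 2 := this
    _ ≤ ε * (n:ℝ)^3 := hkey2
end
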